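/- arXiv:2412.17187 — 11 statements merged into one kernel-verified Lean document; each statement's English description precedes it below -/
import Mathlib

section
/- Let R be a G-graded ring that is gr-prime (i.e., for homogeneous a, b, aRb = {0} implies a = 0 or b = 0). If a, b ∈ R with aRb = {0} and at least one of a, b is homogeneous, then a = 0 or b = 0. -/
def IsHomog {G R : Type*} [Ring R] (A : G → AddSubgroup R) (a : R) : Prop := ∃ g, a ∈ A g

def GrPrime {G R : Type*} [Ring R] (A : G → AddSubgroup R) : Prop :=
  ∀ a b : R, IsHomog A a → IsHomog A b → (∀ r : R, a * r * b = 0) → a = 0 ∨ b = 0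

def IsHomogDer {G R : Type*} [Ring R] (A : G → AddSubgroup R) (d : R → R) : Prop :=
  (∀ x y : R, d (x + y) = d x + d y) ∧
  (∀ x y : R, d (x * y) = d x * y + x * d y) ∧
  (∀ a : R, IsHomog A a → IsHomog A (d a))

def IsGenHomogDer {G R : Type*} [Ring R] (A : G → AddSubgroup R) (F d : R → R) : Prop :=
  (∀ x y : R, F (x + y) = F x + F y) ∧
  IsHomogDer A d ∧
  (∀ x y : R, F (x * y) = F x * y + x * d y) ∧
  (∀ a : R, IsHomog A a → IsHomog A (F a))

theorem stmt0 {G R : Type*} [AddCommGroup G] [DecidableEq G] [Ring R] (A : G → AddSubgroup R) [GradedRing A] (hP : GrPrime A)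
    (a b : R) (hhom : IsHomog A a ∨ IsHomog A b)
    (hab : ∀ r : R, a * r * b = 0) :
    a = 0 ∨ b = 0 := by
  classical
  rcases hhom with ⟨h, ha⟩ | ⟨h, hb⟩
  · -- a is homogeneous
    by_cases ha0 : a = 0
    · exact Or.inl ha0
    right
    -- show each component of b vanishes
    have hcomp : ∀ g : G, (DirectSum.decompose A b g : R) = 0 := by
      intro g
      have key : ∀ r : R, a * r * (DirectSum.decompose A b g : R) = 0 := by
        have homkey : ∀ k : G, ∀ r ∈ A k, a * r * (DirectSum.decompose A b g : R) = 0 := by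
          intro k r hr
          have hark : a * r ∈ A (h + k) := SetLike.mul_mem_graded ha hr
          have := DirectSum.coe_decompose_mul_add_of_left_mem A (b := b) (j := g) hark
          rw [← this, hab r, DirectSum.decompose_zero]
          rfl
        intro r
        have hr := DirectSum.sum_support_decompose A r
        calc a * r * (DirectSum.decompose A b g : R)
            = ∑ k ∈ DFinsupp.support (DirectSum.decompose A r),
                a * (DirectSum.decompose A r k : R) * (DirectSum.decompose A b g : R) := by
              conv_lhs => rw [← hr]
              rw [Finset.mul_sum, Finset.sum_mul]
          _ = 0 := Finset.sum_eq_zero fun k _ =>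
                homkey k _ (SetLike.coe_mem _)
      rcases hP a _ ⟨h, ha⟩ ⟨g, SetLike.coe_mem _⟩ key with h1 | h1
      · exact absurd h1 ha0
      · exact h1
    have := DirectSum.sum_support_decompose A b
    rw [← this]
    exact Finset.sum_eq_zero fun g _ => hcomp g
  · -- b is homogeneous
    by_cases hb0 : b = 0
    · exact Or.inr hb0
    left
    have hcomp : ∀ g : G, (DirectSum.decompose A a g : R) = 0 := by
      intro g
      have key : ∀ r : R, (DirectSum.decompose A a g : R) * r * b = 0 := by
        have homkey : ∀ k : G, ∀ r ∈ A k, (DirectSum.decompose A a g : R) * r * b = 0 := by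
          intro k r hr
          have hrb : r * b ∈ A (k + h) := SetLike.mul_mem_graded hr hb
          have := DirectSum.coe_decompose_mul_add_of_right_mem A (a := a) (i := g) hrb
          rw [mul_assoc, ← this]
          have h0 : a * (r * b) = 0 := by rw [← mul_assoc, hab r]
          rw [h0, DirectSum.decompose_zero]
          rfl
        intro r
        have hr := DirectSum.sum_support_decompose A r
        calc (DirectSum.decompose A a g : R) * r * b
            = ∑ k ∈ DFinsupp.support (DirectSum.decompose A r),
                (DirectSum.decompose A a g : R) * (DirectSum.decompose A r k : R) * b := by
              conv_lhs => rw [← hr]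
              rw [Finset.mul_sum, Finset.sum_mul]
          _ = 0 := Finset.sum_eq_zero fun k _ =>
                homkey k _ (SetLike.coe_mem _)
      rcases hP _ b ⟨g, SetLike.coe_mem _⟩ ⟨h, hb⟩ key with h1 | h1
      · exact h1
      · exact absurd h1 hb0
    have := DirectSum.sum_support_decompose A a
    rw [← this]
    exact Finset.sum_eq_zero fun g _ => hcomp g
end

section
/- Let R be a gr-prime graded ring and I a nonzero graded one-sided ideal of R. Then the centralizer of I in R equals the center Z(R) of R. -/
open DirectSum

lemma keyL {G R : Type*} [AddCommGroup G] [DecidableEq G] [Ring R] (A : G → AddSubgroup R)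
    [GradedRing A] {d b : R} {h0 : G} (hb : b ∈ A h0) (hd : ∀ s : R, d * s * b = 0) :
    ∀ g : G, ∀ s : R, (DirectSum.decompose A d g : R) * s * b = 0 := by
  intro g s
  induction s using DirectSum.Decomposition.inductionOn A with
  | zero => simp
  | @homogeneous i m =>
    have hsb : (m : R) * b ∈ A (i + h0) := SetLike.mul_mem_graded m.2 hb
    have h1 : d * ((m : R) * b) = 0 := by rw [← mul_assoc]; exact hd m
    have h2 : (decompose A (d * ((m : R) * b)) (g + (i + h0)) : R)
        = (decompose A d g : R) * ((m : R) * b) :=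
      DirectSum.coe_decompose_mul_add_of_right_mem A hsb
    rw [mul_assoc]
    rw [← h2, h1]
    simp
  | add a b ha hb' => rw [mul_add, add_mul, ha, hb', add_zero]

lemma keyR {G R : Type*} [AddCommGroup G] [DecidableEq G] [Ring R] (A : G → AddSubgroup R)
    [GradedRing A] {d b : R} {h0 : G} (hb : b ∈ A h0) (hd : ∀ s : R, b * s * d = 0) :
    ∀ g : G, ∀ s : R, b * s * (DirectSum.decompose A d g : R) = 0 := by
  intro g s
  induction s using DirectSum.Decomposition.inductionOn A with
  | zero => simp
  | @homogeneous i m =>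
    have hsb : b * (m : R) ∈ A (h0 + i) := SetLike.mul_mem_graded hb m.2
    have h1 : (b * (m : R)) * d = 0 := hd m
    have h2 : (decompose A ((b * (m : R)) * d) ((h0 + i) + g) : R)
        = (b * (m : R)) * (decompose A d g : R) :=
      DirectSum.coe_decompose_mul_add_of_left_mem A hsb
    rw [← h2, h1]
    simp
  | add a b ha hb' => rw [mul_add, add_mul, ha, hb', add_zero]

lemma zero_of_decompose_zero {G R : Type*} [AddCommGroup G] [DecidableEq G] [Ring R]
    (A : G → AddSubgroup R) [GradedRing A] {d : R}
    (h : ∀ g, (DirectSum.decompose A d g : R) = 0) : d = 0 := by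
  classical
  have := DirectSum.sum_support_decompose A d
  rw [← this]
  exact Finset.sum_eq_zero fun i _ => h i

theorem stmt1 {G R : Type*} [AddCommGroup G] [DecidableEq G] [Ring R] (A : G → AddSubgroup R) [GradedRing A] (hP : GrPrime A)
    (I : AddSubgroup R) (hI0 : I ≠ ⊥)
    (hIone : (∀ (r : R), ∀ x ∈ I, r * x ∈ I) ∨ (∀ (r : R), ∀ x ∈ I, x * r ∈ I))
    (hIgr : ∀ x ∈ I, ∀ g : G, (DirectSum.decompose A x g : R) ∈ I) :
    ∀ x : R, (∀ y ∈ I, x * y = y * x) ↔ (∀ y : R, x * y = y * x) := by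
  classical
  intro x
  constructor
  · intro hx r
    obtain ⟨w, hwI, hw0⟩ : ∃ w ∈ I, w ≠ 0 := by
      by_contra h
      push_neg at h
      exact hI0 ((AddSubgroup.eq_bot_iff_forall I).mpr h)
    obtain ⟨h0, hb0⟩ : ∃ g : G, (DirectSum.decompose A w g : R) ≠ 0 := by
      by_contra h
      push_neg at h
      exact hw0 (zero_of_decompose_zero A h)
    set b : R := (DirectSum.decompose A w h0 : R) with hbdef
    have hbI : b ∈ I := hIgr w hwI h0
    have hbA : b ∈ A h0 := SetLike.coe_mem _
    set d : R := x * r - r * x with hddef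
    suffices hd0 : d = 0 by exact sub_eq_zero.mp hd0
    rcases hIone with hL | hR
    · have hdI : ∀ y ∈ I, d * y = 0 := by
        intro y hy
        have h1 : x * (r * y) = (r * y) * x := hx _ (hL r y hy)
        have h2 : x * y = y * x := hx y hy
        calc d * y = x * (r * y) - r * (x * y) := by
              rw [hddef, sub_mul, mul_assoc, mul_assoc]
        _ = 0 := by rw [h1, h2, ← mul_assoc, mul_assoc, sub_self]
      have hann : ∀ s : R, d * s * b = 0 := fun s => by
        rw [mul_assoc]; exact hdI _ (hL s b hbI)
      apply zero_of_decompose_zero A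
      intro g
      exact (hP (DirectSum.decompose A d g : R) b ⟨g, SetLike.coe_mem _⟩ ⟨h0, hbA⟩
        (keyL A hbA hann g)).resolve_right hb0
    · have hdI : ∀ y ∈ I, y * d = 0 := by
        intro y hy
        have h1 : x * (y * r) = (y * r) * x := hx _ (hR r y hy)
        have h2 : x * y = y * x := hx y hy
        calc y * d = (y * x) * r - (y * r) * x := by
              rw [hddef, mul_sub, ← mul_assoc, ← mul_assoc]
        _ = 0 := by rw [← h2, ← h1, mul_assoc, sub_self]
      have hann : ∀ s : R, b * s * d = 0 := fun s => hdI _ (hR s b hbI)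
      apply zero_of_decompose_zero A
      intro g
      exact (hP b (DirectSum.decompose A d g : R) ⟨h0, hbA⟩ ⟨g, SetLike.coe_mem _⟩
        (keyR A hbA hann g)).resolve_left hb0
  · intro h y _
    exact h y
end

section
/- If a gr-prime graded ring R has a nonzero central graded ideal, then R is commutative. -/
theorem stmt2 {G R : Type*} [AddCommGroup G] [DecidableEq G] [Ring R] (A : G → AddSubgroup R) [GradedRing A] (hP : GrPrime A)
    (I : AddSubgroup R) (hI0 : I ≠ ⊥)
    (hIl : ∀ (r : R), ∀ x ∈ I, r * x ∈ I) (hIr : ∀ (r : R), ∀ x ∈ I, x * r ∈ I)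
    (hIgr : ∀ x ∈ I, ∀ g : G, (DirectSum.decompose A x g : R) ∈ I)
    (hcentral : ∀ x ∈ I, ∀ y : R, x * y = y * x) :
    ∀ x y : R, x * y = y * x := by
  classical
  -- any element of I annihilates every commutator
  have h1 : ∀ z ∈ I, ∀ x y : R, z * (x * y - y * x) = 0 := by
    intro z hz x y
    have e1 : z * x * y = y * (z * x) := hcentral (z * x) (hIr x z hz) y
    have e2 : y * z = z * y := (hcentral z hz y).symm
    have e3 : z * x * y = z * (y * x) := by
      rw [e1, ← mul_assoc, e2, mul_assoc]
    rw [mul_sub, ← mul_assoc, e3, sub_self]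
  -- pick a nonzero element of I
  obtain ⟨a, haI, ha0⟩ : ∃ a ∈ I, a ≠ 0 := by
    by_contra h
    push_neg at h
    exact hI0 (le_antisymm (fun x hx => h x hx ▸ AddSubgroup.zero_mem ⊥) bot_le)
  -- pick a nonzero homogeneous component of a, lying in I
  obtain ⟨g, hg0⟩ : ∃ g : G, (DirectSum.decompose A a g : R) ≠ 0 := by
    by_contra h
    push_neg at h
    apply ha0
    rw [← DirectSum.sum_support_decompose A a]
    exact Finset.sum_eq_zero fun i _ => h i
  set b : R := (DirectSum.decompose A a g : R) with hb
  have hbI : b ∈ I := hIgr a haI g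
  have hbg : b ∈ A g := SetLike.coe_mem _
  -- homogeneous elements commute
  have comm : ∀ x y : R, IsHomog A x → IsHomog A y → x * y = y * x := by
    rintro x y ⟨gx, hx⟩ ⟨gy, hy⟩
    have hc : x * y - y * x ∈ A (gx + gy) := by
      refine AddSubgroup.sub_mem _ (SetLike.mul_mem_graded hx hy) ?_
      have := SetLike.mul_mem_graded hy hx
      rwa [add_comm gy gx] at this
    have hz : ∀ r : R, b * r * (x * y - y * x) = 0 := fun r =>
      h1 (b * r) (hIr r b hbI) x y
    rcases hP b (x * y - y * x) ⟨g, hbg⟩ ⟨gx + gy, hc⟩ hz with h | h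
    · exact absurd h hg0
    · exact sub_eq_zero.mp h
  intro x y
  rw [← DirectSum.sum_support_decompose A x, ← DirectSum.sum_support_decompose A y,
    Finset.sum_mul_sum, Finset.sum_mul_sum, Finset.sum_comm]
  exact Finset.sum_congr rfl fun i _ => Finset.sum_congr rfl fun j _ =>
    comm _ _ ⟨_, SetLike.coe_mem _⟩ ⟨_, SetLike.coe_mem _⟩
end

section
/- Let R be a gr-prime graded ring and I a nonzero graded one-sided ideal of R. If d is a nonzero homogeneous derivation of R, then the restriction of d to I is nonzero. -/
theorem stmt6 {G R : Type*} [AddCommGroup G] [DecidableEq G] [Ring R] (A : G → AddSubgroup R) [GradedRing A] (hP : GrPrime A)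
    (I : AddSubgroup R) (hI0 : I ≠ ⊥)
    (hIone : (∀ (r : R), ∀ x ∈ I, r * x ∈ I) ∨ (∀ (r : R), ∀ x ∈ I, x * r ∈ I))
    (hIgr : ∀ x ∈ I, ∀ g : G, (DirectSum.decompose A x g : R) ∈ I)
    (d : R → R) (hd : IsHomogDer A d) (hd0 : d ≠ 0) :
    ∃ x ∈ I, d x ≠ 0 := by
  obtain ⟨hadd, hmul, hhom⟩ := hd
  by_contra hcon
  push_neg at hcon
  -- d vanishes on I
  have hdI : ∀ x ∈ I, d x = 0 := hcon
  classical
  have hd00 : d 0 = 0 := by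
    have h := hadd 0 0
    rw [add_zero] at h
    exact (left_eq_add.mp h)
  -- nonzero element of I
  obtain ⟨x, hx0, hxI⟩ : ∃ x : R, x ≠ 0 ∧ x ∈ I := by
    rcases AddSubgroup.ne_bot_iff_exists_ne_zero.mp hI0 with ⟨⟨x, hxI⟩, hx⟩
    exact ⟨x, by simpa using hx, hxI⟩
  -- a nonzero homogeneous element of I
  obtain ⟨g, hyne⟩ : ∃ g : G, (DirectSum.decompose A x g : R) ≠ 0 := by
    by_contra h
    push_neg at h
    apply hx0
    rw [← DirectSum.sum_support_decompose A x]
    exact Finset.sum_eq_zero fun g _ => h g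
  set y : R := (DirectSum.decompose A x g : R) with hy
  have hyI : y ∈ I := hIgr x hxI g
  have hyhom : IsHomog A y := ⟨g, SetLike.coe_mem _⟩
  -- d vanishes on homogeneous elements
  have key : ∀ a : R, IsHomog A a → d a = 0 := by
    intro a ha
    rcases hIone with hL | hR
    · have h0 : ∀ s : R, d a * s * y = 0 := by
        intro s
        have hsy : s * y ∈ I := hL s y hyI
        have h1 : d (a * (s * y)) = 0 := hdI _ (hL a _ hsy)
        have h2 : d (s * y) = 0 := hdI _ hsy
        have := hmul a (s * y)
        rw [h1, h2, mul_zero, add_zero] at this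
        rw [mul_assoc]
        exact this.symm
      rcases hP (d a) y (hhom a ha) hyhom h0 with h | h
      · exact h
      · exact absurd h hyne
    · have h0 : ∀ s : R, y * s * d a = 0 := by
        intro s
        have hys : y * s ∈ I := hR s y hyI
        have h1 : d ((y * s) * a) = 0 := hdI _ (hR a _ hys)
        have h2 : d (y * s) = 0 := hdI _ hys
        have := hmul (y * s) a
        rw [h1, h2, zero_mul, zero_add] at this
        exact this.symm
      rcases hP y (d a) hyhom (hhom a ha) h0 with h | h
      · exact absurd h hyne
      · exact h
  -- finite additivity
  have hsum : ∀ (s : Finset G) (f : G → R), d (∑ h ∈ s, f h) = ∑ h ∈ s, d (f h) := by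
    intro s f
    classical
    induction s using Finset.induction_on with
    | empty => simpa using hd00
    | insert _ _ hni ih =>
      rw [Finset.sum_insert hni, Finset.sum_insert hni, hadd, ih]
  apply hd0
  funext r
  show d r = 0
  rw [← DirectSum.sum_support_decompose A r, hsum]
  exact Finset.sum_eq_zero fun h _ => key _ ⟨h, SetLike.coe_mem _⟩
end

section
/- Let R be a gr-prime graded ring and I a nonzero graded ideal of R. If R admits a generalized homogeneous derivation F with nonzero associated homogeneous derivation d such that F(xy) − xy ∈ Z(R) for all x, y ∈ I, then R is commutative. -/
/-- Extension principle: an additively closed predicate holding on all homogeneous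
elements holds everywhere. -/
lemma homog_ext_aux {G R : Type*} [AddCommGroup G] [DecidableEq G] [Ring R]
    (A : G → AddSubgroup R) [GradedRing A]
    (P : R → Prop) (h0 : P 0) (hadd : ∀ a b : R, P a → P b → P (a + b))
    (hhom : ∀ a : R, IsHomog A a → P a) (r : R) : P r := by
  classical
  rw [← DirectSum.sum_support_decompose A r]
  exact Finset.sum_induction _ P hadd h0 (fun g _ => hhom _ ⟨g, SetLike.coe_mem _⟩)

theorem stmt12 {G R : Type*} [AddCommGroup G] [DecidableEq G] [Ring R] (A : G → AddSubgroup R) [GradedRing A] (hP : GrPrime A)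
    (I : AddSubgroup R) (hI0 : I ≠ ⊥)
    (hIl : ∀ (r : R), ∀ x ∈ I, r * x ∈ I) (hIr : ∀ (r : R), ∀ x ∈ I, x * r ∈ I)
    (hIgr : ∀ x ∈ I, ∀ g : G, (DirectSum.decompose A x g : R) ∈ I)
    (F d : R → R) (hF : IsGenHomogDer A F d) (hd : d ≠ 0)
    (h : ∀ x ∈ I, ∀ y ∈ I, ∀ r : R, (F (x * y) - x * y) * r = r * (F (x * y) - x * y)) :
    ∀ a b : R, a * b = b * a := by
  classical
  obtain ⟨Fadd, ⟨dadd, dmul, dhom⟩, Fmul, Fhom⟩ := hF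
  -- basic homogeneity facts
  have hmul_homog : ∀ a b : R, IsHomog A a → IsHomog A b → IsHomog A (a * b) := by
    rintro a b ⟨g, hg⟩ ⟨g', hg'⟩
    exact ⟨g + g', SetLike.mul_mem_graded hg hg'⟩
  have hcomm_homog : ∀ a b : R, IsHomog A a → IsHomog A b → IsHomog A (a * b - b * a) := by
    rintro a b ⟨g, hg⟩ ⟨g', hg'⟩
    refine ⟨g + g', sub_mem (SetLike.mul_mem_graded hg hg') ?_⟩
    have h2 := SetLike.mul_mem_graded hg' hg
    rwa [add_comm g' g] at h2
  have hd0 : d 0 = 0 := by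
    have h2 := dadd 0 0
    rw [add_zero] at h2
    exact left_eq_add.mp h2
  -- extension over all elements
  have ext_all : ∀ (P : R → Prop), P 0 → (∀ a b : R, P a → P b → P (a + b)) →
      (∀ a : R, IsHomog A a → P a) → ∀ r : R, P r :=
    fun P h0 hadd hhom r => homog_ext_aux A P h0 hadd hhom r
  -- gr-primeness needs only homogeneous middle terms
  have GP : ∀ a b : R, IsHomog A a → IsHomog A b →
      (∀ s : R, IsHomog A s → a * s * b = 0) → a = 0 ∨ b = 0 := by
    intro a b ha hb hs
    refine hP a b ha hb ?_
    intro r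
    refine ext_all (fun r => a * r * b = 0) (by simp) ?_ hs r
    intro u v hu hv
    show a * (u + v) * b = 0
    rw [mul_add, add_mul, show a * u * b = 0 from hu, show a * v * b = 0 from hv, add_zero]
  -- a nonzero homogeneous element of I
  obtain ⟨x0, hx0I, hx0ne⟩ : ∃ x ∈ I, x ≠ 0 := by
    by_contra hc
    push_neg at hc
    exact hI0 ((AddSubgroup.eq_bot_iff_forall I).mpr hc)
  obtain ⟨g0, hg0⟩ : ∃ g, (DirectSum.decompose A x0 g : R) ≠ 0 := by
    by_contra hall
    push_neg at hall
    apply hx0ne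
    rw [← DirectSum.sum_support_decompose A x0]
    exact Finset.sum_eq_zero fun g _ => hall g
  set e : R := (DirectSum.decompose A x0 g0 : R) with he
  have heI : e ∈ I := hIgr x0 hx0I g0
  have hehom : IsHomog A e := ⟨g0, SetLike.coe_mem _⟩
  have hene : e ≠ 0 := hg0
  -- (*) : [x*y*d z, z] = 0 for x,y,z ∈ I
  have hstar : ∀ x ∈ I, ∀ y ∈ I, ∀ z ∈ I, (x * y * d z) * z = z * (x * y * d z) := by
    intro x hx y hy z hz
    have h1 := h x hx y hy z
    have h2 := h x hx (y * z) (hIr z y hy) z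
    have key : F (x * (y * z)) - x * (y * z) = (F (x * y) - x * y) * z + x * y * d z := by
      rw [Fmul x (y * z), dmul y z, Fmul x y]
      noncomm_ring
    rw [key, add_mul, mul_add, ← mul_assoc z (F (x * y) - x * y) z, ← h1] at h2
    exact add_left_cancel h2
  -- (**) : (w*z - z*w) * (x*y*d z) = 0
  have hL3 : ∀ w : R, ∀ x ∈ I, ∀ y ∈ I, ∀ z ∈ I, (w * z - z * w) * (x * y * d z) = 0 := by
    intro w x hx y hy z hz
    have h1 := hstar (w * x) (hIl w x hx) y hy z hz
    have h2 := hstar x hx y hy z hz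
    have h2' : x * (y * (d z * z)) = z * (x * (y * d z)) := by
      simpa only [mul_assoc] using h2
    have h1' : w * (x * (y * (d z * z))) = z * (w * (x * (y * d z))) := by
      simpa only [mul_assoc] using h1
    rw [sub_mul, sub_eq_zero]
    simp only [mul_assoc]
    rw [← h2']
    exact h1'
  -- polarized version
  have hpol : ∀ w : R, ∀ x ∈ I, ∀ y ∈ I, ∀ z ∈ I, ∀ z' ∈ I,
      (w * z - z * w) * (x * y * d z') + (w * z' - z' * w) * (x * y * d z) = 0 := by
    intro w x hx y hy z hz z' hz'
    have h1 := hL3 w x hx y hy (z + z') (I.add_mem hz hz')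
    have h2 := hL3 w x hx y hy z hz
    have h3 := hL3 w x hx y hy z' hz'
    rw [dadd] at h1
    have expand : (w * (z + z') - (z + z') * w) * (x * y * (d z + d z')) =
        (w * z - z * w) * (x * y * d z) + (w * z' - z' * w) * (x * y * d z') +
        ((w * z - z * w) * (x * y * d z') + (w * z' - z' * w) * (x * y * d z)) := by
      noncomm_ring
    rw [expand, h2, h3, zero_add, zero_add] at h1
    exact h1
  -- key lemma: if x*y*d z = 0 for all homog x,y ∈ I then d z = 0
  have hK : ∀ z, IsHomog A z →
      (∀ x ∈ I, IsHomog A x → ∀ y ∈ I, IsHomog A y → x * y * d z = 0) → d z = 0 := by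
    intro z hzh hxy
    have hdz : IsHomog A (d z) := dhom z hzh
    have step1 : ∀ y ∈ I, IsHomog A y → y * d z = 0 := by
      intro y hyI hyh
      have hmid : ∀ s : R, IsHomog A s → e * s * (y * d z) = 0 := by
        intro s hs
        have h2 := hxy e heI hehom (s * y) (hIl s y hyI) (hmul_homog _ _ hs hyh)
        calc e * s * (y * d z) = e * (s * y) * d z := by noncomm_ring
          _ = 0 := h2
      rcases GP e (y * d z) hehom (hmul_homog _ _ hyh hdz) hmid with h0 | h0
      · exact absurd h0 hene
      · exact h0
    have hmid : ∀ s : R, IsHomog A s → e * s * d z = 0 := by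
      intro s hs
      exact step1 (e * s) (hIr s e heI) (hmul_homog _ _ hehom hs)
    rcases GP e (d z) hehom hdz hmid with h0 | h0
    · exact absurd h0 hene
    · exact h0
  -- main claim: homogeneous elements of I are central (among homogeneous elements)
  have hcomm : ∀ z ∈ I, IsHomog A z → ∀ w : R, IsHomog A w → w * z = z * w := by
    intro z hzI hzh w hwh
    by_contra hne
    have hane : w * z - z * w ≠ 0 := sub_ne_zero.mpr hne
    have hah : IsHomog A (w * z - z * w) := hcomm_homog w z hwh hzh
    have halpha : ∀ x ∈ I, IsHomog A x → ∀ y ∈ I, IsHomog A y → x * y * d z = 0 := by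
      intro x hxI hxh y hyI hyh
      have hbh : IsHomog A (x * y * d z) :=
        hmul_homog _ _ (hmul_homog _ _ hxh hyh) (dhom z hzh)
      have hmid : ∀ s : R, IsHomog A s → (w * z - z * w) * s * (x * y * d z) = 0 := by
        intro s hsh
        have h2 := hL3 w (s * x) (hIl s x hxI) y hyI z hzI
        calc (w * z - z * w) * s * (x * y * d z)
            = (w * z - z * w) * (s * x * y * d z) := by noncomm_ring
          _ = 0 := h2
      rcases GP _ _ hah hbh hmid with h0 | h0
      · exact absurd h0 hane
      · exact h0
    have hdz0 : d z = 0 := hK z hzh halpha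
    have hall : ∀ z' ∈ I, IsHomog A z' → d z' = 0 := by
      intro z' hz'I hz'h
      apply hK z' hz'h
      intro x hxI hxh y hyI hyh
      have hbh : IsHomog A (x * y * d z') :=
        hmul_homog _ _ (hmul_homog _ _ hxh hyh) (dhom z' hz'h)
      have hmid : ∀ s : R, IsHomog A s → (w * z - z * w) * s * (x * y * d z') = 0 := by
        intro s hsh
        have hp := hpol w (s * x) (hIl s x hxI) y hyI z' hz'I z hzI
        rw [hdz0, mul_zero, mul_zero, zero_add] at hp
        calc (w * z - z * w) * s * (x * y * d z')
            = (w * z - z * w) * (s * x * y * d z') := by noncomm_ring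
          _ = 0 := hp
      rcases GP _ _ hah hbh hmid with h0 | h0
      · exact absurd h0 hane
      · exact h0
    -- then d vanishes on all homogeneous elements, hence d = 0
    have hhr : ∀ r : R, IsHomog A r → d r = 0 := by
      intro r hrh
      have step : ∀ u ∈ I, IsHomog A u → u * d r = 0 := by
        intro u huI huh
        have h1 := hall (u * r) (hIr r u huI) (hmul_homog _ _ huh hrh)
        rw [dmul, hall u huI huh, zero_mul, zero_add] at h1
        exact h1
      have hmid : ∀ s : R, IsHomog A s → e * s * d r = 0 := by
        intro s hsh
        exact step (e * s) (hIr s e heI) (hmul_homog _ _ hehom hsh)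
      rcases GP e (d r) hehom (dhom r hrh) hmid with h0 | h0
      · exact absurd h0 hene
      · exact h0
    apply hd
    funext r
    show d r = 0
    exact ext_all (fun r => d r = 0) hd0
      (fun a b pa pb => by
        show d (a + b) = 0
        rw [dadd, show d a = 0 from pa, show d b = 0 from pb, add_zero]) hhr r
  -- every element of I is central
  have hcomm2 : ∀ z ∈ I, ∀ r : R, r * z = z * r := by
    have hz' : ∀ z ∈ I, IsHomog A z → ∀ r : R, r * z = z * r := by
      intro z hzI hzh r
      exact ext_all (fun r => r * z = z * r) (by simp)
        (fun a b pa pb => by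
          show (a + b) * z = z * (a + b)
          rw [add_mul, mul_add, show a * z = z * a from pa, show b * z = z * b from pb])
        (fun a hah => hcomm z hzI hzh a hah) r
    intro z hzI r
    rw [← DirectSum.sum_support_decompose A z, Finset.mul_sum, Finset.sum_mul]
    exact Finset.sum_congr rfl fun g _ =>
      hz' _ (hIgr z hzI g) ⟨g, SetLike.coe_mem _⟩ r
  -- hence a*b*u = b*a*u for u ∈ I
  have key : ∀ a b : R, ∀ u ∈ I, a * b * u = b * a * u := by
    intro a b u huI
    calc a * b * u = a * (b * u) := by rw [mul_assoc]
      _ = (b * u) * a := hcomm2 (b * u) (hIl b u huI) a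
      _ = b * (u * a) := by rw [mul_assoc]
      _ = b * (a * u) := by rw [hcomm2 u huI a]
      _ = b * a * u := by rw [mul_assoc]
  -- conclude commutativity for homogeneous elements
  have hfin : ∀ a b : R, IsHomog A a → IsHomog A b → a * b = b * a := by
    intro a b hah hbh
    have hr : ∀ r : R, (a * b - b * a) * r * e = 0 := by
      intro r
      have h2 := key a b (r * e) (hIl r e heI)
      calc (a * b - b * a) * r * e = a * b * (r * e) - b * a * (r * e) := by noncomm_ring
        _ = 0 := by rw [h2, sub_self]
    rcases hP (a * b - b * a) e (hcomm_homog a b hah hbh) hehom hr with h0 | h0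
    · exact sub_eq_zero.mp h0
    · exact absurd h0 hene
  -- extend to all elements
  intro a b
  have h1 : ∀ b : R, IsHomog A b → a * b = b * a := by
    intro b hbh
    exact ext_all (fun a => a * b = b * a) (by simp)
      (fun u v pu pv => by
        show (u + v) * b = b * (u + v)
        rw [add_mul, mul_add, show u * b = b * u from pu, show v * b = b * v from pv])
      (fun u hu => hfin u b hu hbh) a
  exact ext_all (fun b => a * b = b * a) (by simp)
    (fun u v pu pv => by
      show a * (u + v) = (u + v) * a
      rw [mul_add, add_mul, show a * u = u * a from pu, show a * v = v * a from pv]) h1 b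
end

section
/- Let R be a gr-prime graded ring and I a nonzero graded ideal of R. If R admits a generalized homogeneous derivation F with nonzero associated homogeneous derivation d such that F(xy) + xy ∈ Z(R) for all x, y ∈ I, then R is commutative. -/
theorem stmt13 {G R : Type*} [AddCommGroup G] [DecidableEq G] [Ring R] (A : G → AddSubgroup R) [GradedRing A] (hP : GrPrime A)
    (I : AddSubgroup R) (hI0 : I ≠ ⊥)
    (hIl : ∀ (r : R), ∀ x ∈ I, r * x ∈ I) (hIr : ∀ (r : R), ∀ x ∈ I, x * r ∈ I)
    (hIgr : ∀ x ∈ I, ∀ g : G, (DirectSum.decompose A x g : R) ∈ I)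
    (F d : R → R) (hF : IsGenHomogDer A F d) (hd : d ≠ 0)
    (h : ∀ x ∈ I, ∀ y ∈ I, ∀ r : R, (F (x * y) + x * y) * r = r * (F (x * y) + x * y)) :
    ∀ a b : R, a * b = b * a := by
  classical
  obtain ⟨hFadd, ⟨hdadd, hdmul, hdhom⟩, hFmul, hFhom⟩ := hF
  have hd0 : d 0 = 0 := by
    have h1 := hdadd 0 0
    rw [add_zero] at h1
    have h2 : d 0 + 0 = d 0 + d 0 := by rw [add_zero]; exact h1
    exact (add_left_cancel h2).symm
  -- span lemmas
  have span : ∀ p : R → Prop, p 0 → (∀ a b, p a → p b → p (a + b)) →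
      (∀ r, IsHomog A r → p r) → ∀ r, p r := by
    intro p h0 hadd hhom r
    rw [← DirectSum.sum_support_decompose A r]
    exact Finset.sum_induction _ p hadd h0
      (fun g _ => hhom _ ⟨g, SetLike.coe_mem _⟩)
  have spanI : ∀ p : R → Prop, p 0 → (∀ a b, p a → p b → p (a + b)) →
      (∀ x, x ∈ I → IsHomog A x → p x) → ∀ x ∈ I, p x := by
    intro p h0 hadd hhom x hx
    rw [← DirectSum.sum_support_decompose A x]
    exact Finset.sum_induction _ p hadd h0
      (fun g _ => hhom _ (hIgr x hx g) ⟨g, SetLike.coe_mem _⟩)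
  -- nonzero homogeneous element of I
  have hx0 : ∃ x0, x0 ∈ I ∧ IsHomog A x0 ∧ x0 ≠ 0 := by
    by_contra hc
    push_neg at hc
    apply hI0
    rw [AddSubgroup.eq_bot_iff_forall]
    exact spanI (fun w => w = 0) rfl (fun a b ha hb => by rw [ha, hb, add_zero])
      (fun x hxI hxh => hc x hxI hxh)
  -- homogeneity closure
  have hmulHomog : ∀ a b : R, IsHomog A a → IsHomog A b → IsHomog A (a * b) := by
    rintro a b ⟨g, hg⟩ ⟨g', hg'⟩
    exact ⟨g + g', SetLike.mul_mem_graded hg hg'⟩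
  have hcommHomog : ∀ a b : R, IsHomog A a → IsHomog A b → IsHomog A (a * b - b * a) := by
    rintro a b ⟨g, hg⟩ ⟨g', hg'⟩
    refine ⟨g + g', sub_mem (SetLike.mul_mem_graded hg hg') ?_⟩
    have := SetLike.mul_mem_graded hg' hg
    rwa [add_comm g' g] at this
  -- key identity (★)
  have star : ∀ x ∈ I, ∀ y ∈ I, ∀ z ∈ I, x * y * d z * z = z * (x * y * d z) := by
    intro x hx y hy z hz
    have hyz : y * z ∈ I := hIr z y hy
    have hc := h x hx y hy
    have he := h x hx (y * z) hyz
    have hFe : F (x * (y * z)) = F (x * y) * z + x * y * d z := by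
      rw [← mul_assoc, hFmul (x * y) z]
    have e1 : (F (x * (y * z)) + x * (y * z)) * z - z * (F (x * (y * z)) + x * (y * z)) = 0 :=
      sub_eq_zero_of_eq (he z)
    have e2 : (F (x * y) + x * y) * z * z - z * (F (x * y) + x * y) * z = 0 := by
      rw [hc z]; exact sub_self _
    have e3 : x * y * d z * z - z * (x * y * d z)
        = ((F (x * (y * z)) + x * (y * z)) * z - z * (F (x * (y * z)) + x * (y * z)))
          - ((F (x * y) + x * y) * z * z - z * (F (x * y) + x * y) * z) := by
      rw [hFe]; noncomm_ring
    rw [e1, e2, sub_zero] at e3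
    exact sub_eq_zero.mp e3
  -- key relation K
  have K : ∀ r : R, ∀ x ∈ I, ∀ y ∈ I, ∀ z ∈ I,
      (r * z - z * r) * (x * y * d z) = 0 := by
    intro r x hx y hy z hz
    have h1 := star (r * x) (hIl r x hx) y hy z hz
    have h2 := star x hx y hy z hz
    calc (r * z - z * r) * (x * y * d z)
        = r * (z * (x * y * d z)) - z * (r * x * y * d z) := by noncomm_ring
      _ = r * (x * y * d z * z) - z * (r * x * y * d z) := by rw [h2]
      _ = r * x * y * d z * z - z * (r * x * y * d z) := by noncomm_ring
      _ = z * (r * x * y * d z) - z * (r * x * y * d z) := by rw [h1]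
      _ = 0 := sub_self _
  have K2 : ∀ r : R, ∀ x ∈ I, ∀ y ∈ I, ∀ z ∈ I, ∀ s : R,
      ((r * z - z * r) * x) * s * (y * d z) = 0 := by
    intro r x hx y hy z hz s
    have h1 := K r (x * s) (hIr s x hx) y hy z hz
    calc ((r * z - z * r) * x) * s * (y * d z)
        = (r * z - z * r) * (x * s * y * d z) := by noncomm_ring
      _ = 0 := h1
  -- L1 : homogeneous z ∈ I with d z ≠ 0 is central
  have L1 : ∀ z ∈ I, IsHomog A z → d z ≠ 0 → ∀ r : R, r * z = z * r := by
    intro z hz hzh hdz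
    have hdzh : IsHomog A (d z) := hdhom z hzh
    obtain ⟨x0, hx0I, hx0h, hx0ne⟩ := hx0
    have hy : ∃ y, y ∈ I ∧ IsHomog A y ∧ y * d z ≠ 0 := by
      by_contra hcon
      push_neg at hcon
      have hIdz : ∀ w ∈ I, w * d z = 0 :=
        spanI (fun w => w * d z = 0) (by simp)
          (fun a b ha hb => by rw [add_mul, ha, hb, add_zero])
          (fun x hxI hxh => hcon x hxI hxh)
      rcases hP x0 (d z) hx0h hdzh (fun s => hIdz (x0 * s) (hIr s x0 hx0I)) with hh | hh
      · exact hx0ne hh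
      · exact hdz hh
    obtain ⟨y, hyI, hyh, hydz⟩ := hy
    have hr : ∀ r : R, IsHomog A r → r * z = z * r := by
      intro r hrh
      have hzero : ∀ x ∈ I, (r * z - z * r) * x = 0 := by
        refine spanI (fun x => (r * z - z * r) * x = 0) (by simp)
          (fun a b ha hb => by rw [mul_add, ha, hb, add_zero]) ?_
        intro x hxI hxh
        rcases hP ((r * z - z * r) * x) (y * d z)
            (hmulHomog _ _ (hcommHomog r z hrh hzh) hxh)
            (hmulHomog _ _ hyh hdzh) (K2 r x hxI y hyI z hz) with hh | hh
        · exact hh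
        · exact absurd hh hydz
      have hall : ∀ s : R, (r * z - z * r) * s * x0 = 0 := by
        intro s
        have := hzero (s * x0) (hIl s x0 hx0I)
        rwa [← mul_assoc] at this
      rcases hP (r * z - z * r) x0 (hcommHomog r z hrh hzh) hx0h hall with hh | hh
      · exact sub_eq_zero.mp hh
      · exact absurd hh hx0ne
    exact span (fun r => r * z = z * r) (by simp)
      (fun a b ha hb => by rw [add_mul, mul_add, ha, hb]) hr
  -- L3 : exists homogeneous z ∈ I with d z ≠ 0
  have L3 : ∃ z, z ∈ I ∧ IsHomog A z ∧ d z ≠ 0 := by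
    by_contra hcon
    push_neg at hcon
    obtain ⟨x0, hx0I, hx0h, hx0ne⟩ := hx0
    have hdI : ∀ w ∈ I, d w = 0 :=
      spanI (fun w => d w = 0) hd0
        (fun a b ha hb => by rw [hdadd, ha, hb, add_zero]) hcon
    have hxdr : ∀ x ∈ I, ∀ r : R, x * d r = 0 := by
      intro x hxI r
      have h1 := hdI (x * r) (hIr r x hxI)
      rw [hdmul, hdI x hxI, zero_mul, zero_add] at h1
      exact h1
    have hdr0 : ∀ r, d r = 0 := by
      refine span (fun r => d r = 0) hd0
        (fun a b ha hb => by rw [hdadd, ha, hb, add_zero]) ?_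
      intro r hrh
      rcases hP x0 (d r) hx0h (hdhom r hrh)
          (fun s => hxdr (x0 * s) (hIr s x0 hx0I) r) with hh | hh
      · exact absurd hh hx0ne
      · exact hh
    exact hd (funext fun r => hdr0 r)
  obtain ⟨z, hzI, hzh, hdz⟩ := L3
  have hzc : ∀ r, r * z = z * r := L1 z hzI hzh hdz
  have hzne : z ≠ 0 := fun hh => hdz (hh ▸ hd0)
  have hc0h : IsHomog A (d z) := hdhom z hzh
  have hc0c : ∀ r : R, r * d z = d z * r := by
    intro r
    have h1 : d (r * z) = d (z * r) := by rw [hzc r]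
    rw [hdmul, hdmul, ← hzc (d r)] at h1
    rw [add_comm (d z * r) (d r * z)] at h1
    exact add_left_cancel h1
  have hc0ne : d z ≠ 0 := hdz
  -- I ⊆ Z(R)
  have hIZ : ∀ w ∈ I, ∀ r : R, r * w = w * r := by
    refine spanI (fun w => ∀ r, r * w = w * r) (by simp)
      (fun a b ha hb r => by rw [mul_add, add_mul, ha, hb]) ?_
    intro x hxI hxh
    by_cases hdx : d x = 0
    · by_cases hxc0 : x * d z = 0
      · have hall : ∀ s, x * s * d z = 0 := by
          intro s
          rw [mul_assoc, hc0c s, ← mul_assoc, hxc0, zero_mul]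
        rcases hP x (d z) hxh hc0h hall with hh | hh
        · intro r; rw [hh, mul_zero, zero_mul]
        · exact absurd hh hc0ne
      · have hw : ∀ r, r * (x * z) = x * z * r := by
          apply L1 (x * z) (hIr z x hxI) (hmulHomog x z hxh hzh)
          rw [hdmul, hdx, zero_mul, zero_add]
          exact hxc0
        have hxr : ∀ r : R, IsHomog A r → r * x = x * r := by
          intro r hrh
          have h1 : (x * r - r * x) * z = 0 := by
            calc (x * r - r * x) * z
                = x * (r * z) - r * (x * z) := by noncomm_ring
              _ = x * (z * r) - r * (x * z) := by rw [hzc r]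
              _ = x * z * r - r * (x * z) := by noncomm_ring
              _ = 0 := sub_eq_zero.mpr (hw r).symm
          have h2 : ∀ s, (x * r - r * x) * s * z = 0 := by
            intro s
            rw [mul_assoc, hzc s, ← mul_assoc, h1, zero_mul]
          rcases hP (x * r - r * x) z (hcommHomog x r hxh hrh) hzh h2 with hh | hh
          · exact (sub_eq_zero.mp hh).symm
          · exact absurd hh hzne
        exact span (fun r => r * x = x * r) (by simp)
          (fun a b ha hb => by rw [add_mul, mul_add, ha, hb]) hxr
    · exact L1 x hxI hxh hdx
  obtain ⟨x0, hx0I, hx0h, hx0ne⟩ := hx0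
  have hx0c : ∀ r, r * x0 = x0 * r := hIZ x0 hx0I
  have main : ∀ a, IsHomog A a → ∀ b, IsHomog A b → a * b = b * a := by
    intro a hah b hbh
    have haxc := hIZ (a * x0) (hIl a x0 hx0I) b
    have h1 : (a * b - b * a) * x0 = 0 := by
      calc (a * b - b * a) * x0
          = a * (b * x0) - b * (a * x0) := by noncomm_ring
        _ = a * (x0 * b) - b * (a * x0) := by rw [hx0c b]
        _ = a * x0 * b - b * (a * x0) := by noncomm_ring
        _ = 0 := sub_eq_zero.mpr haxc.symm
    have h2 : ∀ s, (a * b - b * a) * s * x0 = 0 := by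
      intro s
      rw [mul_assoc, hx0c s, ← mul_assoc, h1, zero_mul]
    rcases hP (a * b - b * a) x0 (hcommHomog a b hah hbh) hx0h h2 with hh | hh
    · exact sub_eq_zero.mp hh
    · exact absurd hh hx0ne
  intro a b
  refine span (fun a => ∀ b, a * b = b * a) (by simp)
    (fun u v hu hv b => by rw [add_mul, mul_add, hu, hv]) ?_ a b
  intro a hah
  refine span (fun b => a * b = b * a) (by simp)
    (fun u v hu hv => by rw [mul_add, add_mul, hu, hv]) ?_
  intro b hbh
  exact main a hah b hbh
end

section
/- Let R be a gr-prime graded ring and I a nonzero graded ideal. Suppose F₁ and F₂ are generalized homogeneous derivations of R associated with nonzero homogeneous derivations d₁ and d₂ respectively, such that F₁(x)F₂(y) − xy ∈ Z(R) for all x, y ∈ I. Then R is commutative. -/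
open scoped Classical

section Aux
variable {G R : Type*} [AddCommGroup G] [DecidableEq G] [Ring R] (A : G → AddSubgroup R) [GradedRing A]

/-- Any element satisfies a property that holds for 0, homogeneous elements, and is
closed under addition. -/
lemma aux_basis (P : R → Prop) (h0 : P 0) (hadd : ∀ a b, P a → P b → P (a + b))
    (hcomp : ∀ (g : G) (u : R), u ∈ A g → P u) (t : R) : P t := by
  rw [← DirectSum.sum_support_decompose A t]
  exact Finset.sum_induction _ P hadd h0 (fun g _ => hcomp g _ (SetLike.coe_mem _))

/-- Version relative to a graded additive subgroup. -/
lemma aux_basisI (I : AddSubgroup R) (hIgr : ∀ x ∈ I, ∀ g : G, (DirectSum.decompose A x g : R) ∈ I)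
    (P : R → Prop) (h0 : P 0) (hadd : ∀ a b, P a → P b → P (a + b))
    (hcomp : ∀ (g : G) (u : R), u ∈ A g → u ∈ I → P u) : ∀ t ∈ I, P t := by
  intro t ht
  rw [← DirectSum.sum_support_decompose A t]
  refine Finset.sum_induction _ P hadd h0 (fun g _ => hcomp g _ (SetLike.coe_mem _) (hIgr t ht g))

/-- Key separation lemma: if `a` is homogeneous nonzero and `a * r * c = 0` for all `r`,
then `c = 0`. -/
lemma aux_killR (hP : GrPrime A) {g : G} {a : R} (ha : a ∈ A g) (ha0 : a ≠ 0)
    (c : R) (hc : ∀ r : R, a * r * c = 0) : c = 0 := by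
  have hcomp : ∀ g0 : G, (DirectSum.decompose A c g0 : R) = 0 := by
    intro g0
    have key : ∀ r : R, a * r * (DirectSum.decompose A c g0 : R) = 0 := by
      have hom : ∀ (k : G) (r : R), r ∈ A k → a * r * (DirectSum.decompose A c g0 : R) = 0 := by
        intro k r hr
        have h1 : a * r * c = ∑ g' ∈ (DirectSum.decompose A c).support,
            a * r * ((DirectSum.decompose A c) g' : R) := by
          conv_lhs => rw [← DirectSum.sum_support_decompose A c]
          rw [Finset.mul_sum]
        have h2 : (DirectSum.decompose A (∑ g' ∈ (DirectSum.decompose A c).support,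
            a * r * ((DirectSum.decompose A c) g' : R)) (g + k + g0) : R) = 0 := by
          rw [← h1, hc r]; simp
        rw [DirectSum.decompose_sum, DFinsupp.finset_sum_apply,
          AddSubmonoidClass.coe_finset_sum] at h2
        by_cases hg0 : g0 ∈ (DirectSum.decompose A c).support
        · rw [Finset.sum_eq_single g0 ?goff ?gnot] at h2
          · rwa [DirectSum.decompose_of_mem_same A
              (SetLike.mul_mem_graded (SetLike.mul_mem_graded ha hr) (SetLike.coe_mem _))] at h2
          · intro g' _ hne
            refine DirectSum.decompose_of_mem_ne A
              (SetLike.mul_mem_graded (SetLike.mul_mem_graded ha hr) (SetLike.coe_mem _)) ?_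
            intro heq
            exact hne (by
              have := add_left_cancel heq
              exact this)
          · intro hg0'; exact absurd hg0 hg0'
        · have : ((DirectSum.decompose A c) g0 : R) = 0 := by
            simpa using DFinsupp.notMem_support_iff.mp hg0
          rw [this, mul_zero]
      refine aux_basis A (fun r => a * r * (DirectSum.decompose A c g0 : R) = 0) ?_ ?_ ?_
      · simp
      · intro r1 r2 p1 p2
        rw [mul_add, add_mul, p1, p2, add_zero]
      · intro k r hr; exact hom k r hr
    rcases hP a _ ⟨g, ha⟩ ⟨g0, SetLike.coe_mem _⟩ key with h' | h'
    · exact absurd h' ha0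
    · exact h'
  calc c = ∑ g' ∈ (DirectSum.decompose A c).support, ((DirectSum.decompose A c) g' : R) :=
        (DirectSum.sum_support_decompose A c).symm
    _ = 0 := by
        refine Finset.sum_eq_zero fun g' _ => hcomp g'

/-- Mirror image of `aux_killR`. -/
lemma aux_killL (hP : GrPrime A) {g : G} {b : R} (hb : b ∈ A g) (hb0 : b ≠ 0)
    (c : R) (hc : ∀ r : R, c * r * b = 0) : c = 0 := by
  have hcomp : ∀ g0 : G, (DirectSum.decompose A c g0 : R) = 0 := by
    intro g0
    have key : ∀ r : R, (DirectSum.decompose A c g0 : R) * r * b = 0 := by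
      have hom : ∀ (k : G) (r : R), r ∈ A k → (DirectSum.decompose A c g0 : R) * r * b = 0 := by
        intro k r hr
        have h1 : c * r * b = ∑ g' ∈ (DirectSum.decompose A c).support,
            ((DirectSum.decompose A c) g' : R) * r * b := by
          conv_lhs => rw [← DirectSum.sum_support_decompose A c]
          rw [Finset.sum_mul, Finset.sum_mul]
        have h2 : (DirectSum.decompose A (∑ g' ∈ (DirectSum.decompose A c).support,
            ((DirectSum.decompose A c) g' : R) * r * b) (g0 + k + g) : R) = 0 := by
          rw [← h1, hc r]; simp
        rw [DirectSum.decompose_sum, DFinsupp.finset_sum_apply,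
          AddSubmonoidClass.coe_finset_sum] at h2
        by_cases hg0 : g0 ∈ (DirectSum.decompose A c).support
        · rw [Finset.sum_eq_single g0 ?goff ?gnot] at h2
          · rwa [DirectSum.decompose_of_mem_same A
              (SetLike.mul_mem_graded (SetLike.mul_mem_graded (SetLike.coe_mem _) hr) hb)] at h2
          · intro g' _ hne
            have hmem : ((DirectSum.decompose A c) g' : R) * r * b ∈ A (g' + k + g) :=
              SetLike.mul_mem_graded (SetLike.mul_mem_graded (SetLike.coe_mem _) hr) hb
            refine DirectSum.decompose_of_mem_ne A hmem ?_
            intro heq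
            apply hne
            have : g' + (k + g) = g0 + (k + g) := by
              rw [← add_assoc, ← add_assoc, heq]
            exact add_right_cancel this
          · intro hg0'; exact absurd hg0 hg0'
        · have : ((DirectSum.decompose A c) g0 : R) = 0 := by
            simpa using DFinsupp.notMem_support_iff.mp hg0
          rw [this, zero_mul, zero_mul]
      refine aux_basis A (fun r => (DirectSum.decompose A c g0 : R) * r * b = 0) ?_ ?_ ?_
      · simp
      · intro r1 r2 p1 p2
        rw [mul_add, add_mul, p1, p2, add_zero]
      · intro k r hr; exact hom k r hr
    rcases hP _ b ⟨g0, SetLike.coe_mem _⟩ ⟨g, hb⟩ key with h' | h'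
    · exact h'
    · exact absurd h' hb0
  calc c = ∑ g' ∈ (DirectSum.decompose A c).support, ((DirectSum.decompose A c) g' : R) :=
        (DirectSum.sum_support_decompose A c).symm
    _ = 0 := Finset.sum_eq_zero fun g' _ => hcomp g'

end Aux

theorem stmt14 {G R : Type*} [AddCommGroup G] [DecidableEq G] [Ring R] (A : G → AddSubgroup R) [GradedRing A] (hP : GrPrime A)
    (I : AddSubgroup R) (hI0 : I ≠ ⊥)
    (hIl : ∀ (r : R), ∀ x ∈ I, r * x ∈ I) (hIr : ∀ (r : R), ∀ x ∈ I, x * r ∈ I)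
    (hIgr : ∀ x ∈ I, ∀ g : G, (DirectSum.decompose A x g : R) ∈ I)
    (F1 d1 F2 d2 : R → R) (hF1 : IsGenHomogDer A F1 d1) (hF2 : IsGenHomogDer A F2 d2)
    (hd1 : d1 ≠ 0) (hd2 : d2 ≠ 0)
    (h : ∀ x ∈ I, ∀ y ∈ I, ∀ r : R, (F1 x * F2 y - x * y) * r = r * (F1 x * F2 y - x * y)) :
    ∀ a b : R, a * b = b * a := by
  obtain ⟨hF1add, ⟨hd1add, hd1mul, hd1hom⟩, hF1mul, hF1hom⟩ := hF1
  obtain ⟨hF2add, ⟨hd2add, hd2mul, hd2hom⟩, hF2mul, hF2hom⟩ := hF2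
  -- a nonzero homogeneous element of I
  obtain ⟨x0, hx0I, hx0ne⟩ : ∃ x ∈ I, x ≠ 0 := by
    rcases I.bot_or_exists_ne_zero with h' | h'
    · exact absurd h' hI0
    · exact h'
  obtain ⟨g0, hg0⟩ : ∃ g0 : G, (DirectSum.decompose A x0 g0 : R) ≠ 0 := by
    by_contra hno
    push_neg at hno
    apply hx0ne
    calc x0 = ∑ g' ∈ (DirectSum.decompose A x0).support, ((DirectSum.decompose A x0) g' : R) :=
          (DirectSum.sum_support_decompose A x0).symm
      _ = 0 := Finset.sum_eq_zero fun g' _ => hno g'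
  set e : R := (DirectSum.decompose A x0 g0 : R) with he_def
  have heA : e ∈ A g0 := SetLike.coe_mem _
  have heI : e ∈ I := hIgr x0 hx0I g0
  have hene : e ≠ 0 := hg0
  clear_value e
  -- a derivation vanishing on I vanishes
  have Dzero : ∀ d : R → R, (∀ a b : R, d (a * b) = d a * b + a * d b) →
      (∀ u ∈ I, d u = 0) → ∀ r : R, d r = 0 := by
    intro d hdmul hdI r
    refine aux_killR A hP heA hene _ fun s => ?_
    have h2 : d (e * s * r) = 0 := hdI _ (hIr r _ (hIr s e heI))
    rw [hdmul, hdI _ (hIr s e heI), zero_mul, zero_add] at h2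
    rw [mul_assoc] at h2 ⊢
    exact h2

  -- expansion identity
  have Sexp : ∀ x y z : R, F1 x * F2 (y * z) - x * (y * z)
      = (F1 x * F2 y - x * y) * z + F1 x * y * d2 z := by
    intro x y z
    rw [hF2mul]
    noncomm_ring
  -- the hypothesis with y replaced by y*z
  have S2 : ∀ x ∈ I, ∀ y ∈ I, ∀ z ∈ I, ∀ r : R,
      ((F1 x * F2 y - x * y) * z + F1 x * y * d2 z) * r
        = r * ((F1 x * F2 y - x * y) * z + F1 x * y * d2 z) := by
    intro x hx y hy z hz r
    have h2 := h x hx (y * z) (hIr z y hy) r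
    rwa [Sexp] at h2
  -- commutator with z
  have S3 : ∀ x ∈ I, ∀ y ∈ I, ∀ z ∈ I,
      F1 x * y * d2 z * z = z * (F1 x * y * d2 z) := by
    intro x hx y hy z hz
    have e1 := sub_eq_zero_of_eq (S2 x hx y hy z hz z)
    have e2 := sub_eq_zero_of_eq (h x hx y hy z)
    have key : F1 x * y * d2 z * z - z * (F1 x * y * d2 z)
        = (((F1 x * F2 y - x * y) * z + F1 x * y * d2 z) * z
            - z * ((F1 x * F2 y - x * y) * z + F1 x * y * d2 z))
          - ((F1 x * F2 y - x * y) * z - z * (F1 x * F2 y - x * y)) * z := by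
      noncomm_ring
    rw [e1, e2, zero_mul, sub_zero] at key
    exact sub_eq_zero.mp key
  have S5 : ∀ x ∈ I, ∀ w ∈ I, ∀ y ∈ I, ∀ z ∈ I, ∀ t : R,
      x * d1 w * t * y * d2 z * z = z * (x * d1 w * t * y * d2 z) := by
    intro x hx w hw y hy z hz t
    have Ea := S3 (x * w) (hIr w x hx) (t * y) (hIl t y hy) z hz
    rw [hF1mul] at Ea
    have ea := sub_eq_zero_of_eq Ea
    have eb := sub_eq_zero_of_eq (S3 x hx (w * (t * y)) (hIr (t*y) w hw) z hz)
    have key : x * d1 w * t * y * d2 z * z - z * (x * d1 w * t * y * d2 z)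
        = ((F1 x * w + x * d1 w) * (t * y) * d2 z * z
            - z * ((F1 x * w + x * d1 w) * (t * y) * d2 z))
          - (F1 x * (w * (t * y)) * d2 z * z - z * (F1 x * (w * (t * y)) * d2 z)) := by
      noncomm_ring
    rw [ea, eb, sub_zero] at key
    exact sub_eq_zero.mp key
  have S7 : ∀ z ∈ I, ∀ x ∈ I, ∀ w ∈ I, ∀ y ∈ I, ∀ s t : R,
      (s * z - z * s) * x * d1 w * t * (y * d2 z) = 0 := by
    intro z hz x hx w hw y hy s t
    have ea := sub_eq_zero_of_eq (S5 x hx w hw y hy z hz t)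
    have eb := sub_eq_zero_of_eq (S5 (s * x) (hIl s x hx) w hw y hy z hz t)
    have key : (s * z - z * s) * x * d1 w * t * (y * d2 z)
        = ((s * x) * d1 w * t * y * d2 z * z - z * ((s * x) * d1 w * t * y * d2 z))
          - (s * (x * d1 w * t * y * d2 z * z) - s * (z * (x * d1 w * t * y * d2 z))) := by
      noncomm_ring
    have ea' : s * (x * d1 w * t * y * d2 z * z) - s * (z * (x * d1 w * t * y * d2 z)) = 0 := by
      rw [← mul_sub, ea, mul_zero]
    rw [eb, ea', sub_zero] at key
    exact key
  have hcommem : ∀ (g1 g2 : G) (u v : R), u ∈ A g1 → v ∈ A g2 → u * v - v * u ∈ A (g1 + g2) := by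
    intro g1 g2 u v hu hv
    refine sub_mem (SetLike.mul_mem_graded hu hv) ?_
    have := SetLike.mul_mem_graded hv hu
    rwa [add_comm g2 g1] at this
  -- Main claim: every homogeneous element of I is central
  have Claim1 : ∀ (gz : G) (z : R), z ∈ A gz → z ∈ I → ∀ r : R, z * r = r * z := by
    intro gz z hzA hzI
    by_contra hzc
    push_neg at hzc
    obtain ⟨t', ht'⟩ := hzc
    -- Part A : d2 z = 0
    have hd2z : d2 z = 0 := by
      by_contra hd2zne
      obtain ⟨gd2, hd2A⟩ := hd2hom z ⟨gz, hzA⟩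
      obtain ⟨gy, y1, hy1A, hy1I, hy1ne⟩ :
          ∃ (gy : G) (y1 : R), y1 ∈ A gy ∧ y1 ∈ I ∧ y1 * d2 z ≠ 0 := by
        by_contra hno
        push_neg at hno
        have hall : ∀ y ∈ I, y * d2 z = 0 := by
          refine aux_basisI A I hIgr (fun y => y * d2 z = 0) (by simp) ?_ ?_
          · intro a b pa pb; rw [add_mul, pa, pb, add_zero]
          · intro g u hu huI; exact hno g u hu huI
        exact hd2zne (aux_killR A hP heA hene _ fun r => hall (e * r) (hIr r e heI))
      have hstep1 : ∀ (ks gw : G) (s w : R), s ∈ A ks → w ∈ A gw → w ∈ I →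
          ∀ u ∈ I, (s * z - z * s) * u * d1 w = 0 := by
        intro ks gw s w hs hwA hwI
        obtain ⟨gd1, hd1A⟩ := hd1hom w ⟨gw, hwA⟩
        refine aux_basisI A I hIgr (fun u => (s * z - z * s) * u * d1 w = 0) (by simp) ?_ ?_
        · intro a b pa pb; rw [mul_add, add_mul, pa, pb, add_zero]
        · intro gu u huA huI
          rcases hP ((s * z - z * s) * u * d1 w) (y1 * d2 z)
              ⟨ks + gz + gu + gd1,
                SetLike.mul_mem_graded (SetLike.mul_mem_graded (hcommem ks gz s z hs hzA) huA) hd1A⟩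
              ⟨gy + gd2, SetLike.mul_mem_graded hy1A hd2A⟩
              (fun t => S7 z hzI u huI w hwI y1 hy1I s t) with h' | h'
          · exact h'
          · exact absurd h' hy1ne
      obtain ⟨gw1, w1, hw1A, hw1I, hw1ne⟩ :
          ∃ (gw : G) (w1 : R), w1 ∈ A gw ∧ w1 ∈ I ∧ d1 w1 ≠ 0 := by
        by_contra hno
        push_neg at hno
        have hall : ∀ u ∈ I, d1 u = 0 := by
          refine aux_basisI A I hIgr (fun u => d1 u = 0) ?_ ?_ ?_
          · have h00 := hd1add 0 0; rw [add_zero] at h00; exact left_eq_add.mp h00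
          · intro a b pa pb; rw [hd1add, pa, pb, add_zero]
          · exact hno
        obtain ⟨r1, hr1⟩ : ∃ r, d1 r ≠ 0 := by
          by_contra hr; push_neg at hr; exact hd1 (funext hr)
        exact hr1 (Dzero d1 hd1mul hall r1)
      obtain ⟨gd1w, hd1wA⟩ := hd1hom w1 ⟨gw1, hw1A⟩
      have hstep2 : ∀ (ks : G) (s : R), s ∈ A ks → ∀ u ∈ I, (s * z - z * s) * u = 0 := by
        intro ks s hs
        refine aux_basisI A I hIgr (fun u => (s * z - z * s) * u = 0) (by simp) ?_ ?_
        · intro a b pa pb; rw [mul_add, pa, pb, add_zero]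
        · intro gu u huA huI
          rcases hP ((s * z - z * s) * u) (d1 w1)
              ⟨ks + gz + gu, SetLike.mul_mem_graded (hcommem ks gz s z hs hzA) huA⟩
              ⟨gd1w, hd1wA⟩
              (fun t => by
                have h2 := hstep1 ks gw1 s w1 hs hw1A hw1I (u * t) (hIr t u huI)
                rwa [← mul_assoc] at h2) with h' | h'
          · exact h'
          · exact absurd h' hw1ne
      have hzcen : ∀ r : R, z * r = r * z := by
        refine aux_basis A (fun r => z * r = r * z) (by simp) ?_ ?_
        · intro a b pa pb; rw [mul_add, add_mul, pa, pb]
        · intro ks s hs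
          have h0 : s * z - z * s = 0 := by
            rcases hP (s * z - z * s) e ⟨ks + gz, hcommem ks gz s z hs hzA⟩ ⟨g0, heA⟩
                (fun t => by
                  have h2 := hstep2 ks s hs (t * e) (hIl t e heI)
                  rwa [← mul_assoc] at h2) with h' | h'
            · exact h'
            · exact absurd h' hene
          exact (sub_eq_zero.mp h0).symm
      exact ht' (hzcen t')
    -- Part B : contradiction
    obtain ⟨k0, t0, ht0A, ht0ne⟩ : ∃ (k : G) (t0 : R), t0 ∈ A k ∧ z * t0 - t0 * z ≠ 0 := by
      by_contra hno
      push_neg at hno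
      have hall : ∀ r : R, z * r - r * z = 0 := by
        refine aux_basis A (fun r => z * r - r * z = 0) (by simp) ?_ ?_
        · intro a b pa pb
          have key : z * (a + b) - (a + b) * z = (z * a - a * z) + (z * b - b * z) := by
            noncomm_ring
          rw [key, pa, pb, add_zero]
        · exact hno
      exact ht' (sub_eq_zero.mp (hall t'))
    have hb0A : z * t0 - t0 * z ∈ A (gz + k0) := hcommem gz k0 z t0 hzA ht0A
    have hkill : ∀ x ∈ I, ∀ y ∈ I, F1 x * F2 y - x * y = 0 := by
      intro x hx y hy
      have E2 : ∀ r' : R, (F1 x * F2 y - x * y) * r' = r' * (F1 x * F2 y - x * y) := h x hx y hy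
      have E3 : ∀ r' : R,
          ((F1 x * F2 y - x * y) * z) * r' = r' * ((F1 x * F2 y - x * y) * z) := by
        intro r'
        have h2 := S2 x hx y hy z hzI r'
        rw [hd2z, mul_zero, add_zero] at h2
        exact h2
      refine aux_killL A hP hb0A ht0ne _ fun r => ?_
      have key : (F1 x * F2 y - x * y) * r * (z * t0 - t0 * z)
          = ((F1 x * F2 y - x * y) * (r * z) - (r * z) * (F1 x * F2 y - x * y)) * t0
            + r * ((z * (F1 x * F2 y - x * y) - (F1 x * F2 y - x * y) * z) * t0)
            + r * (((F1 x * F2 y - x * y) * z) * t0 - t0 * ((F1 x * F2 y - x * y) * z))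
            - ((F1 x * F2 y - x * y) * (r * t0) - (r * t0) * (F1 x * F2 y - x * y)) * z := by
        noncomm_ring
      rw [sub_eq_zero_of_eq (E2 (r * z)), sub_eq_zero_of_eq (E2 (r * t0)),
        sub_eq_zero_of_eq (E3 t0), sub_eq_zero_of_eq (E2 z).symm] at key
      simpa using key
    have h10 : ∀ x ∈ I, ∀ y ∈ I, ∀ z' ∈ I, F1 x * y * d2 z' = 0 := by
      intro x hx y hy z' hz'
      have h2 := hkill x hx (y * z') (hIr z' y hy)
      rw [Sexp, hkill x hx y hy, zero_mul, zero_add] at h2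
      exact h2
    obtain ⟨gz1, z1, hz1A, hz1I, hz1ne⟩ :
        ∃ (g : G) (z1 : R), z1 ∈ A g ∧ z1 ∈ I ∧ d2 z1 ≠ 0 := by
      by_contra hno
      push_neg at hno
      have hall : ∀ u ∈ I, d2 u = 0 := by
        refine aux_basisI A I hIgr (fun u => d2 u = 0) ?_ ?_ ?_
        · have h00 := hd2add 0 0; rw [add_zero] at h00; exact left_eq_add.mp h00
        · intro a b pa pb; rw [hd2add, pa, pb, add_zero]
        · exact hno
      obtain ⟨r1, hr1⟩ : ∃ r, d2 r ≠ 0 := by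
        by_contra hr; push_neg at hr; exact hd2 (funext hr)
      exact hr1 (Dzero d2 hd2mul hall r1)
    obtain ⟨gdz1, hdz1A⟩ := hd2hom z1 ⟨gz1, hz1A⟩
    have hF1I : ∀ x ∈ I, F1 x = 0 := by
      refine aux_basisI A I hIgr (fun x => F1 x = 0) ?_ ?_ ?_
      · have h00 := hF1add 0 0; rw [add_zero] at h00; exact left_eq_add.mp h00
      · intro a b pa pb; rw [hF1add, pa, pb, add_zero]
      · intro gx x hxA hxI
        obtain ⟨gF, hFA⟩ := hF1hom x ⟨gx, hxA⟩
        have hxy : ∀ u ∈ I, F1 x * u = 0 := by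
          refine aux_basisI A I hIgr (fun u => F1 x * u = 0) (by simp) ?_ ?_
          · intro a b pa pb; rw [mul_add, pa, pb, add_zero]
          · intro gu u huA huI
            rcases hP (F1 x * u) (d2 z1) ⟨gF + gu, SetLike.mul_mem_graded hFA huA⟩
                ⟨gdz1, hdz1A⟩ (fun t => by
                  have h2 := h10 x hxI (u * t) (hIr t u huI) z1 hz1I
                  rwa [← mul_assoc] at h2) with h' | h'
            · exact h'
            · exact absurd h' hz1ne
        rcases hP (F1 x) e ⟨gF, hFA⟩ ⟨g0, heA⟩ (fun t => by
            have h2 := hxy (t * e) (hIl t e heI)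
            rwa [← mul_assoc] at h2) with h' | h'
        · exact h'
        · exact absurd h' hene
    have hee : ∀ t : R, e * t * e = 0 := by
      intro t
      have h2 := hkill e heI (t * e) (hIl t e heI)
      rw [hF1I e heI, zero_mul, zero_sub, neg_eq_zero] at h2
      rwa [← mul_assoc] at h2
    rcases hP e e ⟨g0, heA⟩ ⟨g0, heA⟩ hee with h' | h'
    · exact absurd h' hene
    · exact absurd h' hene
  -- I is central, hence R is commutative
  have hIZ : ∀ u ∈ I, ∀ r : R, u * r = r * u := by
    refine aux_basisI A I hIgr (fun u => ∀ r : R, u * r = r * u) (by simp) ?_ ?_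
    · intro a b pa pb r; rw [add_mul, mul_add, pa r, pb r]
    · intro g u huA huI r
      exact Claim1 g u huA huI r
  intro a b
  have key : ∀ r : R, e * r * (a * b - b * a) = 0 := by
    intro r
    have e1 := sub_eq_zero_of_eq (hIZ (e * r * a) (hIr a _ (hIr r e heI)) b)
    have e2 := sub_eq_zero_of_eq (hIZ (e * r) (hIr r e heI) b)
    have key2 : e * r * (a * b - b * a)
        = ((e * r * a) * b - b * (e * r * a)) - ((e * r) * b - b * (e * r)) * a := by
      noncomm_ring
    rw [e1, e2, zero_mul, sub_zero] at key2
    exact key2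
  exact sub_eq_zero.mp (aux_killR A hP heA hene _ key)
end

section
/- Let R be a gr-prime graded ring and I a nonzero graded ideal. Suppose F₁ and F₂ are generalized homogeneous derivations of R associated with nonzero homogeneous derivations d₁ and d₂ respectively, such that F₁(x)F₂(y) + xy ∈ Z(R) for all x, y ∈ I. Then R is commutative. -/
section Helpers

variable {G R : Type*} [AddCommGroup G] [DecidableEq G] [Ring R]
variable (A : G → AddSubgroup R) [GradedRing A]

lemma homog_ind {p : R → Prop} (h0 : p 0)
    (hhom : ∀ (g : G) (m : R), m ∈ A g → p m)
    (hadd : ∀ m m', p m → p m' → p (m + m')) : ∀ r : R, p r := by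
  intro r
  refine DirectSum.Decomposition.inductionOn A h0 ?_ hadd r
  intro i m
  exact hhom i m m.2

lemma decomp_comp_eq_zero (M : R) (hM : ∀ g : G, (DirectSum.decompose A M g : R) = 0) :
    M = 0 := by
  classical
  rw [← DirectSum.sum_support_decompose A M]
  exact Finset.sum_eq_zero fun g _ => hM g

lemma sepR (hP : GrPrime A) {n : R} {gn : G} (hn : n ∈ A gn) (h0 : n ≠ 0) {M : R}
    (H : ∀ (t : R) (g : G), t ∈ A g → M * t * n = 0) : M = 0 := by
  apply decomp_comp_eq_zero A
  intro g'
  have Hall : ∀ r : R, (DirectSum.decompose A M g' : R) * r * n = 0 := by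
    refine homog_ind A ?_ ?_ ?_
    · simp
    · intro gt t ht
      have e1 : (DirectSum.decompose A M g' : R) * t * n
          = (DirectSum.decompose A (M * (t * n)) (g' + (gt + gn)) : R) := by
        rw [DirectSum.coe_decompose_mul_add_of_right_mem A (SetLike.mul_mem_graded ht hn)]
        rw [mul_assoc]
      rw [e1, ← mul_assoc, H t gt ht]
      simp
    · intro m m' hm hm'
      have : (DirectSum.decompose A M g' : R) * (m + m') * n
          = (DirectSum.decompose A M g' : R) * m * n + (DirectSum.decompose A M g' : R) * m' * n := by
        noncomm_ring
      rw [this, hm, hm', add_zero]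
  rcases hP (DirectSum.decompose A M g' : R) n ⟨g', SetLike.coe_mem _⟩ ⟨gn, hn⟩ Hall with h | h
  · exact h
  · exact absurd h h0

lemma sepL (hP : GrPrime A) {n : R} {gn : G} (hn : n ∈ A gn) (h0 : n ≠ 0) {M : R}
    (H : ∀ (t : R) (g : G), t ∈ A g → n * t * M = 0) : M = 0 := by
  apply decomp_comp_eq_zero A
  intro g'
  have Hall : ∀ r : R, n * r * (DirectSum.decompose A M g' : R) = 0 := by
    refine homog_ind A ?_ ?_ ?_
    · simp
    · intro gt t ht
      have e1 : n * t * (DirectSum.decompose A M g' : R)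
          = (DirectSum.decompose A (n * t * M) ((gn + gt) + g') : R) := by
        rw [DirectSum.coe_decompose_mul_add_of_left_mem A (SetLike.mul_mem_graded hn ht)]
      rw [e1, H t gt ht]
      simp
    · intro m m' hm hm'
      have : n * (m + m') * (DirectSum.decompose A M g' : R)
          = n * m * (DirectSum.decompose A M g' : R) + n * m' * (DirectSum.decompose A M g' : R) := by
        noncomm_ring
      rw [this, hm, hm', add_zero]
  rcases hP n (DirectSum.decompose A M g' : R) ⟨gn, hn⟩ ⟨g', SetLike.coe_mem _⟩ Hall with h | h
  · exact absurd h h0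
  · exact h

lemma add_map_eq_zero {d : R → R} (hadd : ∀ x y : R, d (x + y) = d x + d y)
    (hz : ∀ (g : G) (u : R), u ∈ A g → d u = 0) : d = 0 := by
  classical
  funext r
  have : d r = (AddMonoidHom.mk' d hadd) r := rfl
  rw [this, ← DirectSum.sum_support_decompose A r, map_sum]
  simp only [Pi.zero_apply]
  refine Finset.sum_eq_zero fun g _ => ?_
  exact hz g _ (SetLike.coe_mem _)

lemma exists_homog_ne {d : R → R} (hadd : ∀ x y : R, d (x + y) = d x + d y)
    (hd : d ≠ 0) : ∃ (g : G) (u : R), u ∈ A g ∧ d u ≠ 0 := by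
  by_contra hc
  push_neg at hc
  exact hd (add_map_eq_zero A hadd fun g u hu => hc g u hu)

end Helpers

section Cen

variable {R : Type*} [Ring R]

lemma cen_mul {z w : R} (hz : ∀ r, z * r = r * z) (hw : ∀ r, w * r = r * w) :
    ∀ r, (z * w) * r = r * (z * w) := by
  intro r
  calc (z * w) * r = z * (w * r) := by rw [mul_assoc]
    _ = z * (r * w) := by rw [hw r]
    _ = (z * r) * w := by rw [mul_assoc]
    _ = (r * z) * w := by rw [hz r]
    _ = r * (z * w) := by rw [mul_assoc]

lemma cen_sub {z w : R} (hz : ∀ r, z * r = r * z) (hw : ∀ r, w * r = r * w) :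
    ∀ r, (z - w) * r = r * (z - w) := by
  intro r
  rw [sub_mul, mul_sub, hz r, hw r]

end Cen

theorem stmt15 {G R : Type*} [AddCommGroup G] [DecidableEq G] [Ring R] (A : G → AddSubgroup R) [GradedRing A] (hP : GrPrime A)
    (I : AddSubgroup R) (hI0 : I ≠ ⊥)
    (hIl : ∀ (r : R), ∀ x ∈ I, r * x ∈ I) (hIr : ∀ (r : R), ∀ x ∈ I, x * r ∈ I)
    (hIgr : ∀ x ∈ I, ∀ g : G, (DirectSum.decompose A x g : R) ∈ I)
    (F1 d1 F2 d2 : R → R) (hF1 : IsGenHomogDer A F1 d1) (hF2 : IsGenHomogDer A F2 d2)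
    (hd1 : d1 ≠ 0) (hd2 : d2 ≠ 0)
    (h : ∀ x ∈ I, ∀ y ∈ I, ∀ r : R, (F1 x * F2 y + x * y) * r = r * (F1 x * F2 y + x * y)) :
    ∀ a b : R, a * b = b * a := by
  classical
  obtain ⟨hF1add, ⟨hd1add, hd1leib, hd1hom⟩, hF1mul, hF1hom⟩ := hF1
  obtain ⟨hF2add, ⟨hd2add, hd2leib, hd2hom⟩, hF2mul, hF2hom⟩ := hF2
  by_contra hC
  push_neg at hC
  obtain ⟨a, b, hab⟩ := hC
  -- a noncommuting homogeneous pair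
  have hpq : ∃ (p q : R) (gp gq : G), p ∈ A gp ∧ q ∈ A gq ∧ p * q ≠ q * p := by
    by_contra hc
    push_neg at hc
    apply hab
    rw [← DirectSum.sum_support_decompose A a, ← DirectSum.sum_support_decompose A b,
      Finset.sum_mul_sum, Finset.sum_mul_sum]
    rw [Finset.sum_comm]
    refine Finset.sum_congr rfl fun g _ => Finset.sum_congr rfl fun g' _ => ?_
    exact hc _ _ _ _ (SetLike.coe_mem _) (SetLike.coe_mem _)
  obtain ⟨p, q, gp, gq, hpA, hqA, hpq⟩ := hpq
  have hn0 : p * q - q * p ≠ 0 := sub_ne_zero.mpr hpq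
  have hnA : p * q - q * p ∈ A (gp + gq) := by
    refine AddSubgroup.sub_mem _ (SetLike.mul_mem_graded hpA hqA) ?_
    have h2 := SetLike.mul_mem_graded hqA hpA
    rwa [add_comm gq gp] at h2
  -- nonzero homogeneous element of I
  have hy1 : ∃ (y₁ : R) (gy₁ : G), y₁ ∈ I ∧ y₁ ∈ A gy₁ ∧ y₁ ≠ 0 := by
    have : ∃ m ∈ I, m ≠ 0 := by
      by_contra hc
      push_neg at hc
      exact hI0 (AddSubgroup.eq_bot_iff_forall I |>.mpr hc)
    obtain ⟨m, hmI, hm0⟩ := this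
    have : ∃ g : G, (DirectSum.decompose A m g : R) ≠ 0 := by
      by_contra hc
      push_neg at hc
      exact hm0 (decomp_comp_eq_zero A m hc)
    obtain ⟨g, hg⟩ := this
    exact ⟨_, g, hIgr m hmI g, SetLike.coe_mem _, hg⟩
  obtain ⟨y₁, gy₁, hy₁I, hy₁A, hy₁0⟩ := hy1
  -- Step A
  have stepA : ∃ (x₀ y₀ : R) (gx₀ gy₀ : G),
      x₀ ∈ I ∧ y₀ ∈ I ∧ x₀ ∈ A gx₀ ∧ y₀ ∈ A gy₀ ∧ F1 x₀ * y₀ ≠ 0 := by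
    by_contra hA
    push_neg at hA
    have hF10 : ∀ (x : R) (gx : G), x ∈ I → x ∈ A gx → F1 x = 0 := by
      intro x gx hxI hxA
      refine sepR A hP hy₁A hy₁0 fun t g ht => ?_
      have := hA x (t * y₁) gx (g + gy₁) hxI (hIl t y₁ hy₁I) hxA
        (SetLike.mul_mem_graded ht hy₁A)
      rwa [← mul_assoc] at this
    have hxd1 : ∀ (x : R) (gx : G), x ∈ I → x ∈ A gx →
        ∀ (z : R) (gz : G), z ∈ A gz → x * d1 z = 0 := by
      intro x gx hxI hxA z gz hzA
      have h1 : F1 (x * z) = F1 x * z + x * d1 z := hF1mul x z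
      rw [hF10 x gx hxI hxA,
        hF10 (x * z) (gx + gz) (hIr z x hxI) (SetLike.mul_mem_graded hxA hzA)] at h1
      simpa using h1.symm
    have hd1z : ∀ (g : G) (z : R), z ∈ A g → d1 z = 0 := by
      intro gz z hz
      refine sepL A hP hy₁A hy₁0 fun t g ht => ?_
      exact hxd1 (y₁ * t) (gy₁ + g) (hIr t y₁ hy₁I) (SetLike.mul_mem_graded hy₁A ht) _ gz hz
    exact hd1 (add_map_eq_zero A hd1add hd1z)
  obtain ⟨x₀, y₀, gx₀, gy₀, hx₀I, hy₀I, hx₀A, hy₀A, ha₀0⟩ := stepA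
  obtain ⟨gF, hgF⟩ := hF1hom x₀ ⟨gx₀, hx₀A⟩
  have ha₀A : F1 x₀ * y₀ ∈ A (gF + gy₀) := SetLike.mul_mem_graded hgF hy₀A
  obtain ⟨a₀, ha₀eq⟩ : ∃ z : R, z = F1 x₀ * y₀ := ⟨_, rfl⟩
  have ha₀0' : a₀ ≠ 0 := by rw [ha₀eq]; exact ha₀0
  have ha₀A' : a₀ ∈ A (gF + gy₀) := by rw [ha₀eq]; exact ha₀A
  obtain ⟨Φ, hΦeq⟩ : ∃ Φf : R → R,
      ∀ t : R, Φf t = (F1 x₀ * F2 y₀ + x₀ * y₀) * t + a₀ * d2 t := ⟨_, fun _ => rfl⟩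
  -- centrality of Φ t
  have hΦC : ∀ t r : R, Φ t * r = r * Φ t := by
    intro t r
    have hc := h x₀ hx₀I (y₀ * t) (hIr t y₀ hy₀I) r
    have he : F1 x₀ * F2 (y₀ * t) + x₀ * (y₀ * t) = Φ t := by
      rw [hF2mul y₀ t, hΦeq t, ha₀eq]
      noncomm_ring
    rwa [he] at hc
  -- key identity
  have hKI : ∀ T s : R, a₀ * T * d2 s = Φ (T * s) - Φ T * s := by
    intro T s
    rw [hΦeq (T * s), hΦeq T, hd2leib T s]
    noncomm_ring
    -- Claim 3 : Φ t * Φ t' = 0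
  have hψ : ∀ t t' : R, Φ t * Φ t' = 0 := by
    intro t t'
    obtain ⟨T, hT⟩ : ∃ z : R, z = t * d2 q * (a₀ * t') := ⟨_, rfl⟩
    obtain ⟨w₀, hw₀⟩ : ∃ f : R → R,
        ∀ s' : R, f s' = Φ (T * s') - Φ (t * q) * Φ (t' * s') := ⟨_, fun _ => rfl⟩
    obtain ⟨w₁, hw₁⟩ : ∃ z : R, z = Φ (t * q) * Φ t' - Φ T := ⟨_, rfl⟩
    obtain ⟨w₂, hw₂⟩ : ∃ f : R → R, ∀ s' : R, f s' = Φ t * Φ (t' * s') := ⟨_, fun _ => rfl⟩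
    obtain ⟨M₁, hM₁d⟩ : ∃ z : R, z = Φ t * Φ t' * q - w₁ := ⟨_, rfl⟩
    have e1 : a₀ * t * d2 q = Φ (t * q) - Φ t * q := hKI t q
    have e2 : ∀ s' : R, a₀ * t' * d2 s' = Φ (t' * s') - Φ t' * s' := fun s' => hKI t' s'
    have e3 : ∀ s' : R, a₀ * T * d2 s' = Φ (T * s') - Φ T * s' := fun s' => hKI T s'
    have e4 : ∀ s' : R, (Φ (t * q) - Φ t * q) * (Φ (t' * s') - Φ t' * s')
        = Φ (T * s') - Φ T * s' := by
      intro s'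
      rw [← e1, ← e2 s', ← e3 s', hT]
      noncomm_ring
    have eBD : ∀ s' : R, Φ t * q * (Φ t' * s') = Φ t * Φ t' * (q * s') := by
      intro s'
      have h1 : q * Φ t' = Φ t' * q := (hΦC t' q).symm
      calc Φ t * q * (Φ t' * s') = Φ t * (q * Φ t') * s' := by noncomm_ring
        _ = Φ t * (Φ t' * q) * s' := by rw [h1]
        _ = Φ t * Φ t' * (q * s') := by noncomm_ring
    have eBC : ∀ s' : R, Φ t * q * Φ (t' * s') = Φ t * Φ (t' * s') * q := by
      intro s'
      have h1 : q * Φ (t' * s') = Φ (t' * s') * q := (hΦC (t' * s') q).symm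
      calc Φ t * q * Φ (t' * s') = Φ t * (q * Φ (t' * s')) := by noncomm_ring
        _ = Φ t * (Φ (t' * s') * q) := by rw [h1]
        _ = Φ t * Φ (t' * s') * q := by noncomm_ring
    have key5 : ∀ s' : R, Φ t * Φ t' * (q * s') = w₀ s' + w₁ * s' + w₂ s' * q := by
      intro s'
      rw [hw₀ s', hw₁, hw₂ s']
      calc Φ t * Φ t' * (q * s') = Φ t * q * (Φ t' * s') := (eBD s').symm
        _ = (Φ (t * q) - Φ t * q) * (Φ (t' * s') - Φ t' * s')
            - Φ (t * q) * Φ (t' * s') + Φ (t * q) * (Φ t' * s')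
            + Φ t * q * Φ (t' * s') := by noncomm_ring
        _ = (Φ (T * s') - Φ T * s')
            - Φ (t * q) * Φ (t' * s') + Φ (t * q) * (Φ t' * s')
            + Φ t * Φ (t' * s') * q := by rw [e4 s', eBC s']
        _ = _ := by noncomm_ring
    have hw0C : ∀ s' r : R, w₀ s' * r = r * w₀ s' := fun s' r => by
      rw [hw₀ s']; exact cen_sub (hΦC _) (cen_mul (hΦC _) (hΦC _)) r
    have hw1C : ∀ r : R, w₁ * r = r * w₁ := fun r => by
      rw [hw₁]; exact cen_sub (cen_mul (hΦC _) (hΦC _)) (hΦC _) r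
    have hw2C : ∀ s' r : R, w₂ s' * r = r * w₂ s' := fun s' r => by
      rw [hw₂ s']; exact cen_mul (hΦC _) (hΦC _) r
    have hψC : ∀ r : R, (Φ t * Φ t') * r = r * (Φ t * Φ t') := cen_mul (hΦC _) (hΦC _)
    have hM₁ : ∀ s' : R, M₁ * (s' * q - q * s') = 0 := by
      intro s'
      have E_rq : Φ t * Φ t' * (q * s') * q = w₀ s' * q + w₁ * (s' * q) + w₂ s' * (q * q) := by
        rw [key5 s']
        noncomm_ring
      have E_lq : q * (Φ t * Φ t' * (q * s')) = w₀ s' * q + w₁ * (q * s') + w₂ s' * (q * q) := by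
        rw [key5 s']
        calc q * (w₀ s' + w₁ * s' + w₂ s' * q)
            = q * w₀ s' + q * w₁ * s' + q * w₂ s' * q := by noncomm_ring
          _ = w₀ s' * q + w₁ * q * s' + w₂ s' * q * q := by
              rw [← hw0C s' q, ← hw1C q, ← hw2C s' q]
          _ = w₀ s' * q + w₁ * (q * s') + w₂ s' * (q * q) := by noncomm_ring
      have E_l2 : q * (Φ t * Φ t' * (q * s')) = Φ t * Φ t' * (q * (q * s')) := by
        calc q * (Φ t * Φ t' * (q * s')) = q * (Φ t * Φ t') * (q * s') := by noncomm_ring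
          _ = (Φ t * Φ t') * q * (q * s') := by rw [← hψC q]
          _ = Φ t * Φ t' * (q * (q * s')) := by noncomm_ring
      have expand : M₁ * (s' * q - q * s')
          = Φ t * Φ t' * (q * s') * q - Φ t * Φ t' * (q * (q * s'))
            - w₁ * (s' * q) + w₁ * (q * s') := by
        rw [hM₁d]
        noncomm_ring
      rw [expand, E_rq, ← E_l2, E_lq]
      abel
    have hM₁n : ∀ s' : R, M₁ * s' * (p * q - q * p) = 0 := by
      intro s'
      have h1 := hM₁ (s' * p)
      have h2 : M₁ * (s' * q - q * s') * p = 0 := by rw [hM₁ s', zero_mul]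
      have expand : M₁ * s' * (p * q - q * p)
          = M₁ * (s' * p * q - q * (s' * p)) - M₁ * (s' * q - q * s') * p := by
        noncomm_ring
      rw [expand, h1, h2, sub_zero]
    have hM₁0 : M₁ = 0 := sepR A hP hnA hn0 fun s' g _ => hM₁n s'
    rw [hM₁d] at hM₁0
    have hψq : Φ t * Φ t' * q = w₁ := sub_eq_zero.mp hM₁0
    have hψqC : ∀ r : R, (Φ t * Φ t' * q) * r = r * (Φ t * Φ t' * q) := by
      intro r; rw [hψq]; exact hw1C r
    have hψn : Φ t * Φ t' * (p * q - q * p) = 0 := by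
      have e5 : Φ t * Φ t' * (q * p) = Φ t * Φ t' * (p * q) := by
        calc Φ t * Φ t' * (q * p) = (Φ t * Φ t' * q) * p := by noncomm_ring
          _ = p * (Φ t * Φ t' * q) := hψqC p
          _ = p * (Φ t * Φ t') * q := by noncomm_ring
          _ = (Φ t * Φ t') * p * q := by rw [hψC p]
          _ = Φ t * Φ t' * (p * q) := by noncomm_ring
      rw [mul_sub, e5, sub_self]
    refine sepR A hP hnA hn0 fun s' g _ => ?_
    calc Φ t * Φ t' * s' * (p * q - q * p)
        = s' * (Φ t * Φ t') * (p * q - q * p) := by rw [hψC s']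
      _ = s' * (Φ t * Φ t' * (p * q - q * p)) := by noncomm_ring
      _ = 0 := by rw [hψn, mul_zero]
  -- Claim 4
  have hbig : ∀ t u t'' : R, a₀ * t * (d2 u * Φ t'') = 0 := by
    intro t u t''
    have h1 : (Φ t * u) * Φ t'' = 0 := by
      calc (Φ t * u) * Φ t'' = Φ t * (u * Φ t'') := by noncomm_ring
        _ = Φ t * (Φ t'' * u) := by rw [← hΦC t'' u]
        _ = (Φ t * Φ t'') * u := by noncomm_ring
        _ = 0 := by rw [hψ t t'', zero_mul]
    calc a₀ * t * (d2 u * Φ t'') = (a₀ * t * d2 u) * Φ t'' := by noncomm_ring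
      _ = (Φ (t * u) - Φ t * u) * Φ t'' := by rw [hKI t u]
      _ = Φ (t * u) * Φ t'' - (Φ t * u) * Φ t'' := by rw [sub_mul]
      _ = 0 := by rw [hψ (t * u) t'', h1, sub_zero]
  have hdΦ : ∀ u t'' : R, d2 u * Φ t'' = 0 := fun u t'' =>
    sepL A hP ha₀A' ha₀0' fun t g _ => hbig t u t''
  obtain ⟨gu₀, u₀, hu₀A, hdu₀⟩ := exists_homog_ne A hd2add hd2
  obtain ⟨gd, hgd⟩ := hd2hom u₀ ⟨gu₀, hu₀A⟩
  have hΦ0 : ∀ t'' : R, Φ t'' = 0 := by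
    intro t''
    refine sepR A hP hgd hdu₀ fun t g _ => ?_
    calc Φ t'' * t * d2 u₀ = t * Φ t'' * d2 u₀ := by rw [hΦC t'' t]
      _ = t * (Φ t'' * d2 u₀) := by noncomm_ring
      _ = t * (d2 u₀ * Φ t'') := by rw [← hΦC t'' (d2 u₀)]
      _ = 0 := by rw [hdΦ u₀ t'', mul_zero]
  have hd2z : ∀ u : R, d2 u = 0 := by
    intro u
    refine sepL A hP ha₀A' ha₀0' fun t g _ => ?_
    have h2 : a₀ * t * d2 u = Φ (t * u) - Φ t * u := hKI t u
    rw [hΦ0 (t * u), hΦ0 t, zero_mul, sub_zero] at h2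
    exact h2
  exact hd2 (funext hd2z)
end

section
/- Let R be a gr-prime graded ring, I a nonzero graded ideal, and d a homogeneous derivation of R. If I·d(z) = {0} for all z ∈ R, then d = 0. -/
theorem stmt17 {G R : Type*} [AddCommGroup G] [DecidableEq G] [Ring R] (A : G → AddSubgroup R) [GradedRing A] (hP : GrPrime A)
    (I : AddSubgroup R) (hI0 : I ≠ ⊥)
    (hIl : ∀ (r : R), ∀ x ∈ I, r * x ∈ I) (hIr : ∀ (r : R), ∀ x ∈ I, x * r ∈ I)
    (hIgr : ∀ x ∈ I, ∀ g : G, (DirectSum.decompose A x g : R) ∈ I)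
    (d : R → R) (hd : IsHomogDer A d)
    (h : ∀ z : R, ∀ x ∈ I, x * d z = 0) :
    d = 0 := by
  classical
  obtain ⟨hadd, hmul, hhom⟩ := hd
  -- find a nonzero homogeneous element of I
  obtain ⟨a, haI, ha0⟩ : ∃ a ∈ I, a ≠ 0 := by
    by_contra hc
    push_neg at hc
    apply hI0
    ext y
    simp only [AddSubgroup.mem_bot]
    exact ⟨fun hy => hc y hy, fun hy => hy ▸ I.zero_mem⟩
  obtain ⟨x, hxI, hx0, hxhom⟩ : ∃ x ∈ I, x ≠ 0 ∧ IsHomog A x := by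
    by_contra hc
    push_neg at hc
    apply ha0
    have hcomp : ∀ g : G, (DirectSum.decompose A a g : R) = 0 := by
      intro g
      by_contra h0
      exact hc _ (hIgr a haI g) h0 ⟨g, SetLike.coe_mem _⟩
    calc a = ∑ g ∈ (DirectSum.decompose A a).support, ((DirectSum.decompose A a) g : R) :=
            (DirectSum.sum_support_decompose A a).symm
      _ = 0 := Finset.sum_eq_zero fun g _ => hcomp g
  -- d vanishes on homogeneous elements
  have hdz0 : ∀ z : R, IsHomog A z → d z = 0 := by
    intro z hz
    rcases hP x (d z) hxhom (hhom z hz)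
      (fun r => h z (x * r) (hIr r x hxI)) with h1 | h2
    · exact absurd h1 hx0
    · exact h2
  -- extend to all elements by additivity
  let f : R →+ R := AddMonoidHom.mk' d hadd
  funext z
  show d z = 0
  calc d z = f (∑ g ∈ (DirectSum.decompose A z).support, ((DirectSum.decompose A z) g : R)) := by
        rw [DirectSum.sum_support_decompose A z]; rfl
    _ = ∑ g ∈ (DirectSum.decompose A z).support, f ((DirectSum.decompose A z) g : R) :=
        map_sum f _ _
    _ = 0 := Finset.sum_eq_zero fun g _ => hdz0 _ ⟨g, SetLike.coe_mem _⟩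
end

section
/- Let R be a gr-prime graded ring and I a nonzero graded ideal of R. If [z, z₁] I = {0} for all z, z₁ ∈ I (i.e., I is a commutative-modulo-annihilation ideal), then all elements of I commute: [z, z₁] = 0 for all z, z₁ ∈ I, and consequently R is commutative. -/
/-- Key lemma: if `c * r * x = 0` for all `r`, with `x` a nonzero homogeneous element,
then `c = 0` in a gr-prime ring. -/
lemma key_lemma {G R : Type*} [AddCommGroup G] [DecidableEq G] [Ring R]
    (A : G → AddSubgroup R) [GradedRing A] (hP : GrPrime A)
    {x : R} {gx : G} (hx : x ∈ A gx) (hx0 : x ≠ 0)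
    (c : R) (hc : ∀ r : R, c * r * x = 0) : c = 0 := by
  classical
  have hcomp : ∀ g : G, (DirectSum.decompose A c g : R) = 0 := by
    intro g
    have hhom : ∀ (gr : G) (r : R), r ∈ A gr →
        (DirectSum.decompose A c g : R) * r * x = 0 := by
      intro gr r hr
      have hrx : r * x ∈ A (gr + gx) := SetLike.mul_mem_graded hr hx
      have h1 : (DirectSum.decompose A (c * (r * x)) (g + (gr + gx)) : R)
          = (DirectSum.decompose A c g : R) * (r * x) :=
        DirectSum.coe_decompose_mul_add_of_right_mem A hrx
      have h0 : c * (r * x) = 0 := by rw [← mul_assoc]; exact hc r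
      rw [h0] at h1
      simpa [mul_assoc] using h1.symm
    have hall : ∀ r : R, (DirectSum.decompose A c g : R) * r * x = 0 := by
      intro r
      conv_lhs => rw [← DirectSum.sum_support_decompose A r]
      rw [Finset.mul_sum, Finset.sum_mul]
      exact Finset.sum_eq_zero fun i _ =>
        hhom i _ (SetLike.coe_mem (DirectSum.decompose A r i))
    rcases hP _ x ⟨g, SetLike.coe_mem _⟩ ⟨gx, hx⟩ hall with h' | h'
    · exact h'
    · exact absurd h' hx0
  have := DirectSum.sum_support_decompose A c
  rw [← this]
  exact Finset.sum_eq_zero fun g _ => hcomp g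

theorem stmt18 {G R : Type*} [AddCommGroup G] [DecidableEq G] [Ring R] (A : G → AddSubgroup R) [GradedRing A] (hP : GrPrime A)
    (I : AddSubgroup R) (hI0 : I ≠ ⊥)
    (hIl : ∀ (r : R), ∀ x ∈ I, r * x ∈ I) (hIr : ∀ (r : R), ∀ x ∈ I, x * r ∈ I)
    (hIgr : ∀ x ∈ I, ∀ g : G, (DirectSum.decompose A x g : R) ∈ I)
    (h : ∀ z ∈ I, ∀ z1 ∈ I, ∀ x ∈ I, (z * z1 - z1 * z) * x = 0) :
    (∀ z ∈ I, ∀ z1 ∈ I, z * z1 = z1 * z) ∧ (∀ a b : R, a * b = b * a) := by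
  classical
  -- find a nonzero homogeneous element of I
  obtain ⟨a, haI, ha0⟩ : ∃ a ∈ I, a ≠ 0 := by
    by_contra hcon
    push_neg at hcon
    exact hI0 (by ext y; simp only [AddSubgroup.mem_bot]; exact ⟨fun hy => hcon y hy, fun hy => hy ▸ I.zero_mem⟩)
  obtain ⟨g0, hg0⟩ : ∃ g : G, (DirectSum.decompose A a g : R) ≠ 0 := by
    by_contra hcon
    push_neg at hcon
    apply ha0
    rw [← DirectSum.sum_support_decompose A a]
    exact Finset.sum_eq_zero fun g _ => hcon g
  set x₀ : R := (DirectSum.decompose A a g0 : R) with hx₀def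
  have hx₀I : x₀ ∈ I := hIgr a haI g0
  have hx₀A : x₀ ∈ A g0 := SetLike.coe_mem _
  -- Part 1
  have part1 : ∀ z ∈ I, ∀ z1 ∈ I, z * z1 = z1 * z := by
    intro z hz z1 hz1
    have hc : ∀ r : R, (z * z1 - z1 * z) * r * x₀ = 0 := by
      intro r
      rw [mul_assoc]
      exact h z hz z1 hz1 (r * x₀) (hIl r x₀ hx₀I)
    have := key_lemma A hP hx₀A hg0 _ hc
    exact sub_eq_zero.mp this
  -- Step B : x*y is central for x, y ∈ I
  have stepB : ∀ x ∈ I, ∀ y ∈ I, ∀ r : R, x * y * r = r * (x * y) := by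
    intro x hx y hy r
    calc x * y * r = x * (y * r) := by rw [mul_assoc]
      _ = (y * r) * x := part1 x hx (y * r) (hIr r y hy)
      _ = y * (r * x) := by rw [mul_assoc]
      _ = (r * x) * y := (part1 (r * x) (hIl r x hx) y hy).symm
      _ = r * (x * y) := by rw [mul_assoc]
  -- Step C : [s,r] * x * y = 0
  have stepC : ∀ s r : R, ∀ x ∈ I, ∀ y ∈ I, (s * r - r * s) * (x * y) = 0 := by
    intro s r x hx y hy
    have b1 := stepB (r * x) (hIl r x hx) y hy s
    have b2 := stepB x hx y hy s
    have h1 : s * (r * (x * y)) = r * s * (x * y) := by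
      calc s * (r * (x * y)) = s * (r * x * y) := by rw [mul_assoc r]
        _ = r * x * y * s := b1.symm
        _ = r * (x * y * s) := by rw [mul_assoc, mul_assoc, mul_assoc]
        _ = r * (s * (x * y)) := by rw [b2]
        _ = r * s * (x * y) := by rw [mul_assoc]
    rw [sub_mul, mul_assoc s, h1, sub_self]
  -- Part 2
  refine ⟨part1, fun s r => ?_⟩
  set c : R := s * r - r * s with hcdef
  have hstep : ∀ u : R, c * u * x₀ = 0 := by
    intro u
    apply key_lemma A hP hx₀A hg0
    intro r'
    have heq : c * u * x₀ * r' * x₀ = c * ((u * x₀) * (r' * x₀)) := by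
      simp [mul_assoc]
    rw [heq]
    exact stepC s r (u * x₀) (hIl u x₀ hx₀I) (r' * x₀) (hIl r' x₀ hx₀I)
  have hc0 : c = 0 := key_lemma A hP hx₀A hg0 c hstep
  exact sub_eq_zero.mp hc0
end

section
/- In a gr-prime graded ring R, if a ∈ R satisfies aRd(y) = {0} for all y ∈ R, where d is a homogeneous derivation and a is a nonzero homogeneous element, then d = 0. -/
theorem stmt19 {G R : Type*} [AddCommGroup G] [DecidableEq G] [Ring R] (A : G → AddSubgroup R) [GradedRing A] (hP : GrPrime A)
    (d : R → R) (hd : IsHomogDer A d)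
    (a : R) (ha : IsHomog A a) (ha0 : a ≠ 0)
    (h : ∀ y r : R, a * r * d y = 0) :
    d = 0 := by
  -- d vanishes on homogeneous elements
  have hhom : ∀ y : R, IsHomog A y → d y = 0 := by
    intro y hy
    rcases hP a (d y) ha (hd.2.2 y hy) (fun r => h y r) with h1 | h2
    · exact absurd h1 ha0
    · exact h2
  classical
  funext x
  have hD := DirectSum.sum_support_decompose A x
  let D : R →+ R := AddMonoidHom.mk' d (fun x y => hd.1 x y)
  calc d x = D x := rfl
    _ = D (∑ i ∈ (DirectSum.decompose A x).support, (DirectSum.decompose A x i : R)) := by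
        rw [hD]
    _ = ∑ i ∈ (DirectSum.decompose A x).support, D ((DirectSum.decompose A x i : R)) :=
        map_sum D _ _
    _ = 0 := by
        apply Finset.sum_eq_zero
        intro i _
        exact hhom _ ⟨i, (DirectSum.decompose A x i).2⟩
end
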